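/- arXiv:1211.3588 — 9 statements merged into one kernel-verified Lean document; each statement's English description precedes it below -/
import Mathlib

section
/- Let n ≥ 1 and let H be a subgroup of Sym(n). Then the orbit sum F := ∑_{σ∈H} (∏_{i=1}^{n-1} X_i^i)^σ ∈ ℤ[X_1,…,X_n] satisfies Stab_{Sym(n)}(F) = H; that is, F is a Sym(n)-relative H-invariant. -/
open MvPolynomial

private lemma aux_rename_mono {n : ℕ} (σ : Equiv.Perm (Fin n)) (D : Fin n →₀ ℕ) :
    rename (⇑σ) (monomial D (1 : ℤ)) = monomial (D.mapDomain ⇑σ) 1 :=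
  rename_monomial _ _ _

/-- Let `n ≥ 1` and let `H` be a subgroup of `Sym(n)`.  The orbit sum
`F := ∑_{σ ∈ H} (∏_{i} X_i^i)^σ` (where the monomial is `X_0^0 X_1^1 ⋯ X_{n-1}^{n-1}`,
i.e. `∏_{i=1}^{n-1} X_i^i` up to relabelling of the variables, and `m^σ` denotes the
variable-permutation action `X_i ↦ X_{σ(i)}`, i.e. `MvPolynomial.rename σ`) satisfies
`Stab_{Sym(n)}(F) = H`:  for every permutation `τ`, `F^τ = F` iff `τ ∈ H`. -/
theorem statement0 (n : ℕ) (hn : 1 ≤ n) (H : Subgroup (Equiv.Perm (Fin n))) [Fintype ↥H] :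
    ∀ τ : Equiv.Perm (Fin n),
      rename (⇑τ) (∑ σ : H, rename (⇑(σ : Equiv.Perm (Fin n)))
          (∏ i : Fin n, (X i : MvPolynomial (Fin n) ℤ) ^ (i : ℕ)))
        = (∑ σ : H, rename (⇑(σ : Equiv.Perm (Fin n)))
          (∏ i : Fin n, (X i : MvPolynomial (Fin n) ℤ) ^ (i : ℕ)))
      ↔ τ ∈ H := by
  intro τ
  set D : Fin n →₀ ℕ := Finsupp.equivFunOnFinite.symm (fun i : Fin n => (i : ℕ)) with hDdef
  have hDapp : ∀ j : Fin n, D j = (j : ℕ) := fun j => rfl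
  have hprod : (∏ i : Fin n, (X i : MvPolynomial (Fin n) ℤ) ^ (i : ℕ)) = monomial D 1 := by
    rw [← prod_X_pow_eq_monomial]
    apply (Finset.prod_subset (Finset.subset_univ D.support) _).symm
    intro x _ hx
    have : D x = 0 := Finsupp.notMem_support_iff.mp hx
    rw [hDapp] at this
    rw [this, pow_zero]
  have hinj : ∀ σ σ' : Equiv.Perm (Fin n),
      D.mapDomain ⇑σ = D.mapDomain ⇑σ' → σ = σ' := by
    intro σ σ' h
    have happ : ∀ ρ : Equiv.Perm (Fin n), ∀ j, D.mapDomain ⇑ρ j = ((ρ.symm j : Fin n) : ℕ) := by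
      intro ρ j
      conv_lhs => rw [← ρ.apply_symm_apply j]
      rw [Finsupp.mapDomain_apply ρ.injective, hDapp]
    have : ∀ j, σ.symm j = σ'.symm j := by
      intro j
      have : D.mapDomain ⇑σ j = D.mapDomain ⇑σ' j := by rw [h]
      rw [happ σ j, happ σ' j] at this
      exact Fin.val_injective this
    have hsymm : σ.symm = σ'.symm := Equiv.ext this
    calc σ = σ.symm.symm := (Equiv.symm_symm σ).symm
      _ = σ'.symm.symm := by rw [hsymm]
      _ = σ' := Equiv.symm_symm σ'
  rw [hprod]
  simp only [aux_rename_mono]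
  rw [map_sum]
  have hren : ∀ σ : H, rename (⇑τ) (monomial (D.mapDomain ⇑(σ : Equiv.Perm (Fin n))) (1 : ℤ))
      = monomial (D.mapDomain ⇑(τ * (σ : Equiv.Perm (Fin n)))) 1 := by
    intro σ
    rw [rename_monomial, ← Finsupp.mapDomain_comp, Equiv.Perm.coe_mul]
  simp only [hren]
  constructor
  · intro h
    by_contra hτ
    have hc := congrArg (fun p => coeff (D.mapDomain ⇑τ) p) h
    simp only [coeff_sum, coeff_monomial] at hc
    have hL : (∑ σ : H, if D.mapDomain ⇑(τ * (σ : Equiv.Perm (Fin n))) = D.mapDomain ⇑τ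
        then (1 : ℤ) else 0) = 1 := by
      rw [Finset.sum_eq_single (1 : H)]
      · simp
      · intro σ _ hσ
        rw [if_neg]
        intro he
        have h1 : τ * (σ : Equiv.Perm (Fin n)) = τ * 1 := by
          rw [mul_one]; exact hinj _ _ he
        exact hσ (Subtype.ext (mul_left_cancel h1))
      · simp
    have hR : (∑ σ : H, if D.mapDomain ⇑((σ : Equiv.Perm (Fin n))) = D.mapDomain ⇑τ
        then (1 : ℤ) else 0) = 0 := by
      apply Finset.sum_eq_zero
      intro σ _
      rw [if_neg]
      intro he
      exact hτ (hinj _ _ he ▸ σ.2)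
    rw [hL, hR] at hc
    exact one_ne_zero hc
  · intro hτ
    exact Fintype.sum_equiv (Equiv.mulLeft (⟨τ, hτ⟩ : H)) _ _ (fun σ => rfl)
end

section
/- Let n ≥ 1, let H ≤ G be subgroups of Sym(n), and let F ∈ ℤ[X_1,…,X_n] be a G-relative H-invariant (i.e., Stab_G(F) = H). Then, viewing F as an element of ℚ(X_1,…,X_n), the fixed field ℚ(X_1,…,X_n)^H is generated over ℚ(X_1,…,X_n)^G by F: ℚ(X_1,…,X_n)^H = ℚ(X_1,…,X_n)^G(F). -/
set_option synthInstance.maxHeartbeats 1000000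
set_option maxHeartbeats 1000000


open MvPolynomial

/-- The rational function field `ℚ(X_1,…,X_n)`, realized as the fraction field of the
polynomial ring `ℚ[X_1,…,X_n]`. -/
abbrev RatFuncField (n : ℕ) : Type := FractionRing (MvPolynomial (Fin n) ℚ)

/-- The field automorphism of `ℚ(X_1,…,X_n)` induced by a permutation `σ` of the
variables, `X_i ↦ X_{σ(i)}`. -/
noncomputable def permAut (n : ℕ) (σ : Equiv.Perm (Fin n)) :
    RatFuncField n ≃+* RatFuncField n :=
  IsFractionRing.ringEquivOfRingEquiv (renameEquiv ℚ σ).toRingEquiv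

/-- The fixed field `ℚ(X_1,…,X_n)^G` of a subgroup `G ≤ Sym(n)`. -/
noncomputable def fixedField (n : ℕ) (G : Subgroup (Equiv.Perm (Fin n))) :
    Subfield (RatFuncField n) where
  carrier := {x | ∀ σ ∈ G, permAut n σ x = x}
  mul_mem' := by
    intro a b ha hb σ hσ
    rw [map_mul, ha σ hσ, hb σ hσ]
  one_mem' := by intro σ hσ; rw [map_one]
  add_mem' := by
    intro a b ha hb σ hσ
    rw [map_add, ha σ hσ, hb σ hσ]
  zero_mem' := by intro σ hσ; rw [map_zero]
  neg_mem' := by intro a ha σ hσ; rw [map_neg, ha σ hσ]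
  inv_mem' := by intro a ha σ hσ; rw [map_inv₀, ha σ hσ]

/-- A polynomial `F ∈ ℤ[X_1,…,X_n]`, viewed as an element of `ℚ(X_1,…,X_n)`. -/
noncomputable def asRatFunc (n : ℕ) (F : MvPolynomial (Fin n) ℤ) : RatFuncField n :=
  algebraMap (MvPolynomial (Fin n) ℚ) (RatFuncField n) (map (Int.castRingHom ℚ) F)

/-! ### Auxiliary lemmas -/

lemma permAut_algebraMap (n : ℕ) (σ : Equiv.Perm (Fin n)) (p : MvPolynomial (Fin n) ℚ) :
    permAut n σ (algebraMap (MvPolynomial (Fin n) ℚ) (RatFuncField n) p)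
      = algebraMap (MvPolynomial (Fin n) ℚ) (RatFuncField n) (rename σ p) :=
  IsFractionRing.ringEquivOfRingEquiv_algebraMap _ p

lemma permAut_one (n : ℕ) (x : RatFuncField n) : permAut n 1 x = x := by
  have h : (permAut n 1 : RatFuncField n →+* RatFuncField n) = RingHom.id _ := by
    apply IsLocalization.ringHom_ext (nonZeroDivisors (MvPolynomial (Fin n) ℚ))
    refine RingHom.ext fun p => ?_
    simp only [RingHom.comp_apply, RingHom.coe_coe, RingHom.id_apply, permAut_algebraMap]
    congr 1
    simp [rename_id]
  exact congrArg (· x) (congrArg DFunLike.coe h)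

lemma permAut_mul (n : ℕ) (σ τ : Equiv.Perm (Fin n)) (x : RatFuncField n) :
    permAut n (σ * τ) x = permAut n σ (permAut n τ x) := by
  have h : (permAut n (σ * τ) : RatFuncField n →+* RatFuncField n)
      = ((permAut n σ : RatFuncField n →+* RatFuncField n)).comp (permAut n τ) := by
    apply IsLocalization.ringHom_ext (nonZeroDivisors (MvPolynomial (Fin n) ℚ))
    refine RingHom.ext fun p => ?_
    simp only [RingHom.comp_apply, RingHom.coe_coe, permAut_algebraMap, rename_rename]
    congr 1
  exact congrArg (· x) (congrArg DFunLike.coe h)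

/-- The action of a subgroup `G ≤ Sym(n)` on `ℚ(X_1,…,X_n)` by field automorphisms. -/
noncomputable instance permAction (n : ℕ) (G : Subgroup (Equiv.Perm (Fin n))) :
    MulSemiringAction G (RatFuncField n) where
  smul g x := permAut n (g : Equiv.Perm (Fin n)) x
  one_smul x := permAut_one n x
  mul_smul g h x := permAut_mul n g h x
  smul_zero g := map_zero (permAut n (g : Equiv.Perm (Fin n)))
  smul_add g := map_add (permAut n (g : Equiv.Perm (Fin n)))
  smul_one g := map_one (permAut n (g : Equiv.Perm (Fin n)))
  smul_mul g := map_mul (permAut n (g : Equiv.Perm (Fin n)))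

lemma permAction_smul_def (n : ℕ) (G : Subgroup (Equiv.Perm (Fin n))) (g : G)
    (x : RatFuncField n) : g • x = permAut n (g : Equiv.Perm (Fin n)) x := rfl

instance permAction_faithful (n : ℕ) (G : Subgroup (Equiv.Perm (Fin n))) :
    FaithfulSMul G (RatFuncField n) where
  eq_of_smul_eq_smul {g h} H := by
    refine Subtype.ext (Equiv.ext fun i => ?_)
    have := H (algebraMap (MvPolynomial (Fin n) ℚ) (RatFuncField n) (X i))
    rw [permAction_smul_def, permAction_smul_def, permAut_algebraMap, permAut_algebraMap,
      rename_X, rename_X] at this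
    have h2 := IsFractionRing.injective (MvPolynomial (Fin n) ℚ) (RatFuncField n) this
    exact X_injective h2

theorem statement2 (n : ℕ) (hn : 1 ≤ n) (G H : Subgroup (Equiv.Perm (Fin n)))
    (hHG : H ≤ G)
    (F : MvPolynomial (Fin n) ℤ)
    (hF : ∀ σ ∈ G, (rename (⇑σ) F = F ↔ σ ∈ H)) :
    fixedField n H = Subfield.closure ((fixedField n G : Set (RatFuncField n)) ∪ {asRatFunc n F}) := by
  classical
  set L := RatFuncField n with hL
  set f := asRatFunc n F with hf
  -- key: for σ ∈ G, permAut σ fixes f iff σ ∈ H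
  have keyfix : ∀ σ : Equiv.Perm (Fin n), σ ∈ G →
      (permAut n σ f = f ↔ σ ∈ H) := by
    intro σ hσ
    rw [← hF σ hσ, hf]
    unfold asRatFunc
    rw [permAut_algebraMap]
    constructor
    · intro h
      have h2 : rename (⇑σ) (map (Int.castRingHom ℚ) F) = map (Int.castRingHom ℚ) F :=
        IsFractionRing.injective (MvPolynomial (Fin n) ℚ) (RatFuncField n) h
      rw [← map_rename] at h2
      exact MvPolynomial.map_injective (Int.castRingHom ℚ) Int.cast_injective h2
    · intro h
      rw [← map_rename, h]
  refine le_antisymm ?_ ?_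
  · -- fixedField H ⊆ closure
    intro x hx
    -- work with the Galois correspondence for the action of G on L
    set K := FixedPoints.subfield G L with hK
    haveI : IsGalois K L := ⟨⟩
    set E := IntermediateField.adjoin K ({f} : Set L) with hE
    have hfE : f ∈ E := IntermediateField.subset_adjoin K ({f} : Set L) rfl
    -- x is fixed by the fixing subgroup of E
    have hxE : x ∈ E := by
      rw [← IsGalois.fixedField_fixingSubgroup E]
      intro g
      obtain ⟨σ, hσ⟩ := FixedPoints.toAlgAut_surjective G L (↑g : L ≃ₐ[K] L)
      have hgf : (↑g : L ≃ₐ[K] L) f = f := g.2 ⟨f, hfE⟩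
      have hfix : permAut n (σ : Equiv.Perm (Fin n)) f = f := by
        rw [← hσ] at hgf; exact hgf
      have hσH : (σ : Equiv.Perm (Fin n)) ∈ H := (keyfix _ σ.2).mp hfix
      show (↑g : L ≃ₐ[K] L) x = x
      rw [← hσ]
      exact hx _ hσH
    -- translate membership in E into membership in the closure
    have hsub : (Set.range (algebraMap K L) ∪ ({f} : Set L))
        ⊆ ((fixedField n G : Set L) ∪ {f}) := by
      rintro y (⟨⟨z, hz⟩, rfl⟩ | hy)
      · exact Or.inl (fun σ hσ => hz ⟨σ, hσ⟩)
      · exact Or.inr hy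
    exact Subfield.closure_mono hsub hxE
  · -- closure ⊆ fixedField H
    refine Subfield.closure_le.mpr ?_
    rintro y (hy | hy)
    · exact fun σ hσ => hy σ (hHG hσ)
    · rcases hy with rfl
      exact fun σ hσ => (keyfix σ (hHG hσ)).mpr hσ
end

section
/- Let H < G ≤ Sym(n) be transitive subgroups with H maximal in G, and let B_1,…,B_m be a block system for H (a partition of {1,…,n} into blocks preserved by H) that is not a block system for G (some g ∈ G does not preserve the partition). Then F := ∏_{i=1}^m ( ∑_{j ∈ B_i} X_j ) ∈ ℤ[X_1,…,X_n] is a G-relative H-invariant, i.e., Stab_G(F) = H. -/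
open MvPolynomial

private lemma aux_pderiv_sum {n : ℕ} (y : Fin n) (s : Finset (Fin n)) :
    pderiv y (∑ j ∈ s, (X j : MvPolynomial (Fin n) ℤ)) = if y ∈ s then 1 else 0 := by
  classical
  rw [map_sum]
  by_cases hy : y ∈ s
  · rw [Finset.sum_eq_single y (fun b _ hb => pderiv_X_of_ne hb) (fun h => absurd hy h),
      pderiv_X_self, if_pos hy]
  · rw [if_neg hy, Finset.sum_eq_zero]
    intro b hb
    exact pderiv_X_of_ne (fun h => hy (h ▸ hb))

private lemma aux_pderiv_prod_zero {n m : ℕ} (B : Fin m → Finset (Fin n)) (y : Fin n)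
    (s : Finset (Fin m)) (h : ∀ k ∈ s, y ∉ B k) :
    pderiv y (∏ k ∈ s, ∑ j ∈ B k, (X j : MvPolynomial (Fin n) ℤ)) = 0 := by
  classical
  induction s using Finset.induction_on with
  | empty => simp
  | @insert a s ha ih =>
    rw [Finset.prod_insert ha, pderiv_mul, aux_pderiv_sum,
      if_neg (h a (Finset.mem_insert_self a s)),
      ih (fun k hk => h k (Finset.mem_insert_of_mem hk))]
    ring

private lemma aux_pderiv_prod {n m : ℕ} (B : Fin m → Finset (Fin n))
    (hdisj : ∀ i j, i ≠ j → Disjoint (B i) (B j))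
    (y : Fin n) (i : Fin m) (hy : y ∈ B i) (s : Finset (Fin m)) (hi : i ∈ s) :
    pderiv y (∏ k ∈ s, ∑ j ∈ B k, (X j : MvPolynomial (Fin n) ℤ))
      = ∏ k ∈ s.erase i, ∑ j ∈ B k, X j := by
  classical
  rw [← Finset.mul_prod_erase s _ hi, pderiv_mul, aux_pderiv_sum, if_pos hy,
    aux_pderiv_prod_zero B y _ (fun k hk hyk =>
      (Finset.disjoint_left.mp (hdisj k i (Finset.mem_erase.mp hk).1) hyk) hy),
    mul_zero, add_zero, one_mul]

private lemma aux_prod_ne_zero {n m : ℕ} (B : Fin m → Finset (Fin n))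
    (hne : ∀ i, (B i).Nonempty) (s : Finset (Fin m)) :
    (∏ k ∈ s, ∑ j ∈ B k, (X j : MvPolynomial (Fin n) ℤ)) ≠ 0 := by
  intro h
  have h1 := congrArg (eval (fun _ => (1 : ℤ))) h
  simp only [map_prod, map_sum, eval_X, map_zero, Finset.sum_const, nsmul_eq_mul, mul_one] at h1
  obtain ⟨k, _, hk⟩ := Finset.prod_eq_zero_iff.mp h1
  exact (hne k).card_pos.ne' (by exact_mod_cast hk)

private lemma aux_key {n m : ℕ} (B : Fin m → Finset (Fin n))
    (hne : ∀ i, (B i).Nonempty)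
    (hdisj : ∀ i j, i ≠ j → Disjoint (B i) (B j))
    (hcover : ∀ x : Fin n, ∃ i, x ∈ B i)
    (σ : Equiv.Perm (Fin n))
    (hF : rename (⇑σ) (∏ i : Fin m, ∑ j ∈ B i, (X j : MvPolynomial (Fin n) ℤ))
        = ∏ i : Fin m, ∑ j ∈ B i, X j)
    {i j : Fin m} {x : Fin n} (hx : x ∈ B i) (hσx : σ x ∈ B j) :
    ∀ y ∈ B i, σ y ∈ B j := by
  classical
  intro y hy
  obtain ⟨k, hk⟩ := hcover (σ y)
  by_contra hcon
  have hkj : k ≠ j := fun h => hcon (h ▸ hk)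
  have h1 : pderiv x (pderiv y (∏ i : Fin m, ∑ j ∈ B i, (X j : MvPolynomial (Fin n) ℤ))) = 0 := by
    rw [aux_pderiv_prod B hdisj y i hy Finset.univ (Finset.mem_univ i)]
    exact aux_pderiv_prod_zero B x _ (fun l hl hxl =>
      (Finset.disjoint_left.mp (hdisj l i (Finset.mem_erase.mp hl).1) hxl) hx)
  have h2 : pderiv (σ x) (pderiv (σ y)
      (∏ i : Fin m, ∑ j ∈ B i, (X j : MvPolynomial (Fin n) ℤ))) ≠ 0 := by
    rw [aux_pderiv_prod B hdisj (σ y) k hk Finset.univ (Finset.mem_univ k),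
      aux_pderiv_prod B hdisj (σ x) j hσx _
        (Finset.mem_erase.mpr ⟨hkj.symm, Finset.mem_univ j⟩)]
    exact aux_prod_ne_zero B hne _
  apply h2
  calc pderiv (σ x) (pderiv (σ y) (∏ i : Fin m, ∑ j ∈ B i, (X j : MvPolynomial (Fin n) ℤ)))
      = pderiv (σ x) (pderiv (σ y)
          (rename (⇑σ) (∏ i : Fin m, ∑ j ∈ B i, (X j : MvPolynomial (Fin n) ℤ)))) := by rw [hF]
    _ = rename (⇑σ) (pderiv x (pderiv y
          (∏ i : Fin m, ∑ j ∈ B i, (X j : MvPolynomial (Fin n) ℤ)))) := by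
          rw [pderiv_rename σ.injective, pderiv_rename σ.injective]
    _ = 0 := by rw [h1, map_zero]

/-- Let `H < G ≤ Sym(n)` be transitive subgroups with `H` maximal in `G`,
and let `B_1,…,B_m` be a block system for `H` (a partition of `{1,…,n}` into nonempty
pairwise disjoint sets, permuted by `H`) that is not a block system for `G` (some `g ∈ G`
maps some block to a set that is not a block of the system).  Then
`F := ∏_{i=1}^m (∑_{j ∈ B_i} X_j)` is a `G`-relative `H`-invariant: `Stab_G(F) = H`,
the action being `X_i ↦ X_{σ(i)}` (`MvPolynomial.rename σ`). -/
theorem statement7 (n m : ℕ) (G H : Subgroup (Equiv.Perm (Fin n)))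
    (hHG : H < G)
    (hmax : ∀ K : Subgroup (Equiv.Perm (Fin n)), H < K → K ≤ G → K = G)
    (hHtrans : ∀ a b : Fin n, ∃ σ ∈ H, σ a = b)
    (hGtrans : ∀ a b : Fin n, ∃ σ ∈ G, σ a = b)
    (B : Fin m → Finset (Fin n))
    (hne : ∀ i, (B i).Nonempty)
    (hdisj : ∀ i j, i ≠ j → Disjoint (B i) (B j))
    (hcover : ∀ x : Fin n, ∃ i, x ∈ B i)
    (hHblocks : ∀ h ∈ H, ∀ i, ∃ j, Finset.image (⇑h) (B i) = B j)
    (hnotG : ∃ g ∈ G, ∃ i, ∀ j, Finset.image (⇑g) (B i) ≠ B j) :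
    ∀ σ ∈ G,
      (rename (⇑σ) (∏ i : Fin m, ∑ j ∈ B i, (X j : MvPolynomial (Fin n) ℤ))
          = ∏ i : Fin m, ∑ j ∈ B i, X j
        ↔ σ ∈ H) := by
  classical
  have fwd : ∀ τ ∈ H,
      rename (⇑τ) (∏ i : Fin m, ∑ j ∈ B i, (X j : MvPolynomial (Fin n) ℤ))
        = ∏ i : Fin m, ∑ j ∈ B i, X j := by
    intro τ hτ
    set π : Fin m → Fin m := fun i => (hHblocks τ hτ i).choose with hπdef
    have hπ : ∀ i, Finset.image (⇑τ) (B i) = B (π i) :=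
      fun i => (hHblocks τ hτ i).choose_spec
    have hinj : Function.Injective π := by
      intro a b hab
      by_contra hne'
      have hBab : B a = B b := by
        have h3 : B (π a) = B (π b) := by rw [hab]
        exact Finset.image_injective τ.injective ((hπ a).trans (h3.trans (hπ b).symm))
      obtain ⟨x, hxa⟩ := hne a
      exact Finset.disjoint_left.mp (hdisj a b hne') hxa (hBab ▸ hxa)
    have hbij := Finite.injective_iff_bijective.mp hinj
    calc rename (⇑τ) (∏ i : Fin m, ∑ j ∈ B i, (X j : MvPolynomial (Fin n) ℤ))
        = ∏ i : Fin m, ∑ j ∈ B (π i), X j := by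
          rw [map_prod]
          refine Finset.prod_congr rfl fun i _ => ?_
          rw [map_sum]
          simp only [rename_X]
          rw [← hπ i, Finset.sum_image (fun a _ b _ h => τ.injective h)]
      _ = ∏ i : Fin m, ∑ j ∈ B i, X j :=
          Equiv.prod_comp (Equiv.ofBijective π hbij) (fun i => ∑ j ∈ B i, X j)
  have hblocks_of_fix : ∀ σ : Equiv.Perm (Fin n),
      rename (⇑σ) (∏ i : Fin m, ∑ j ∈ B i, (X j : MvPolynomial (Fin n) ℤ))
        = ∏ i : Fin m, ∑ j ∈ B i, X j →
      ∀ i, ∃ j, Finset.image (⇑σ) (B i) = B j := by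
    intro σ hσ i
    have hσinv : rename (⇑σ⁻¹) (∏ i : Fin m, ∑ j ∈ B i, (X j : MvPolynomial (Fin n) ℤ))
        = ∏ i : Fin m, ∑ j ∈ B i, X j := by
      conv_lhs => rw [← hσ]
      rw [rename_rename]
      have hid : (⇑σ⁻¹ ∘ ⇑σ) = id := by funext x; simp
      rw [hid, rename_id, AlgHom.id_apply]
    obtain ⟨x, hx⟩ := hne i
    obtain ⟨j, hj⟩ := hcover (σ x)
    refine ⟨j, Finset.Subset.antisymm ?_ ?_⟩
    · intro z hz
      obtain ⟨y, hy, rfl⟩ := Finset.mem_image.mp hz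
      exact aux_key B hne hdisj hcover σ hσ hx hj y hy
    · intro z hz
      have h1 : σ⁻¹ (σ x) ∈ B i := by simpa using hx
      have h2 := aux_key B hne hdisj hcover σ⁻¹ hσinv hj h1 z hz
      exact Finset.mem_image.mpr ⟨σ⁻¹ z, h2, by simp⟩
  intro σ hσG
  constructor
  swap
  · intro hσH; exact fwd σ hσH
  intro hfix
  let K : Subgroup (Equiv.Perm (Fin n)) :=
    { carrier := {τ | τ ∈ G ∧
        rename (⇑τ) (∏ i : Fin m, ∑ j ∈ B i, (X j : MvPolynomial (Fin n) ℤ))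
          = ∏ i : Fin m, ∑ j ∈ B i, X j}
      one_mem' := ⟨G.one_mem, by simp⟩
      mul_mem' := fun {a b} ha hb => ⟨G.mul_mem ha.1 hb.1, by
        have hc : ⇑(a * b) = ⇑a ∘ ⇑b := rfl
        rw [hc, ← rename_rename, hb.2, ha.2]⟩
      inv_mem' := fun {a} ha => ⟨G.inv_mem ha.1, by
        conv_lhs => rw [← ha.2]
        rw [rename_rename]
        have hid : (⇑a⁻¹ ∘ ⇑a) = id := by funext x; simp
        rw [hid, rename_id, AlgHom.id_apply]⟩ }
  have hHK : H ≤ K := fun τ hτ => ⟨hHG.le hτ, fwd τ hτ⟩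
  have hKG : K ≤ G := fun τ hτ => hτ.1
  rcases lt_or_eq_of_le hHK with hlt | heq
  · exfalso
    have hKeqG := hmax K hlt hKG
    obtain ⟨g, hgG, i, hgi⟩ := hnotG
    have hgK : g ∈ K := by rw [hKeqG]; exact hgG
    obtain ⟨j, hj⟩ := hblocks_of_fix g hgK.2 i
    exact hgi j hj
  · rw [heq]
    exact (⟨hσG, hfix⟩ : σ ∈ K)
end

section
/- Let H ≤ G ≤ Sym(n) be transitive subgroups with a common block system B_1,…,B_m (a partition of {1,…,n} preserved by G, hence by H). Let φ : G → Sym(m) be the induced action on the blocks (φ(g) maps i to j when B_i^g = B_j), set N_G := ker(φ) ∩ G, N_H := ker(φ) ∩ H, Ḡ := φ(G) and H̄ := φ(H), and assume N_H = N_G. Let E ∈ ℤ[X_1,…,X_m] be a Ḡ-relative H̄-invariant (Stab_{Ḡ}(E) = H̄). Then F := E(Y_1,…,Y_m), where Y_i := ∑_{j ∈ B_i} X_j, is a G-relative H-invariant: Stab_G(F) = H. -/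
open MvPolynomial

/-- Let `H ≤ G ≤ Sym(n)` be transitive subgroups with a common block
system `B_1,…,B_m` (a partition of `{1,…,n}` preserved by `G`, hence by `H`).  Let
`φ : G → Sym(m)` be the induced action on the blocks (`φ(g)` maps `i` to `j` when
`B_i^g = B_j`), set `N_G := ker(φ)`, `N_H := {h ∈ H | φ(h) = 1}`, `Ḡ := φ(G)` and
`H̄ := φ(H)`, and assume `N_H = N_G` (since `N_H ⊆ N_G` always holds, this is the
hypothesis `hker` below).  Let `E ∈ ℤ[X_1,…,X_m]` be a `Ḡ`-relative `H̄`-invariant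
(`Stab_{Ḡ}(E) = H̄`).  Then `F := E(Y_1,…,Y_m)`, where `Y_i := ∑_{j ∈ B_i} X_j`, is a
`G`-relative `H`-invariant: `Stab_G(F) = H`.  The action on polynomials is
`X_i ↦ X_{σ(i)}` (`MvPolynomial.rename σ`). -/
theorem statement8 (n m : ℕ) (G H : Subgroup (Equiv.Perm (Fin n)))
    (hHG : H ≤ G)
    (hHtrans : ∀ a b : Fin n, ∃ σ ∈ H, σ a = b)
    (hGtrans : ∀ a b : Fin n, ∃ σ ∈ G, σ a = b)
    (B : Fin m → Finset (Fin n))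
    (hne : ∀ i, (B i).Nonempty)
    (hdisj : ∀ i j, i ≠ j → Disjoint (B i) (B j))
    (hcover : ∀ x : Fin n, ∃ i, x ∈ B i)
    (φ : ↥G →* Equiv.Perm (Fin m))
    (hφ : ∀ (g : ↥G) (i : Fin m),
      Finset.image (⇑(g : Equiv.Perm (Fin n))) (B i) = B (φ g i))
    (hker : ∀ g : ↥G, φ g = 1 → (g : Equiv.Perm (Fin n)) ∈ H)
    (E : MvPolynomial (Fin m) ℤ)
    (hE : ∀ τ : Equiv.Perm (Fin m), τ ∈ φ.range →
      (rename (⇑τ) E = E ↔ τ ∈ Subgroup.map φ (H.subgroupOf G))) :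
    ∀ g ∈ G,
      (rename (⇑g) (aeval (fun i => ∑ j ∈ B i, (X j : MvPolynomial (Fin n) ℤ)) E)
          = aeval (fun i => ∑ j ∈ B i, (X j : MvPolynomial (Fin n) ℤ)) E
        ↔ g ∈ H) := by

  classical
  intro g hg
  set Y : Fin m → MvPolynomial (Fin n) ℤ := fun i => ∑ j ∈ B i, X j with hY
  have hblock : ∀ i j x, x ∈ B i → x ∈ B j → i = j := by
    intro i j x hxi hxj
    by_contra h
    exact Finset.disjoint_left.mp (hdisj i j h) hxi hxj
  let b : Fin n → Fin m := fun x => (hcover x).choose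
  have hbmem : ∀ x, x ∈ B (b x) := fun x => (hcover x).choose_spec
  let r : Fin m → Fin n := fun i => (hne i).choose
  have hr : ∀ i, r i ∈ B i := fun i => (hne i).choose_spec
  let f : Fin n → MvPolynomial (Fin m) ℤ := fun x => if x = r (b x) then X (b x) else 0
  have hfY : ∀ i, aeval f (Y i) = X i := by
    intro i
    simp only [hY, map_sum, aeval_X]
    rw [Finset.sum_eq_single (r i)]
    · have hb : b (r i) = i := hblock _ _ _ (hbmem _) (hr i)
      simp [f, hb]
    · intro x hx hne'
      have hbx : b x = i := hblock _ _ _ (hbmem x) hx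
      simp [f, hbx, hne']
    · intro h; exact absurd (hr i) h
  have hinj : ∀ p q : MvPolynomial (Fin m) ℤ, aeval Y p = aeval Y q → p = q := by
    intro p q h
    have key : ∀ p : MvPolynomial (Fin m) ℤ, aeval f (aeval Y p) = p := by
      intro p
      have : (aeval f).comp (aeval Y) = aeval (fun i => aeval f (Y i)) :=
        comp_aeval Y (aeval f)
      have h2 := congrFun (congrArg DFunLike.coe this) p
      simp only [AlgHom.comp_apply] at h2
      rw [h2]
      simp only [hfY]
      exact aeval_X_left_apply p
    have := congrArg (aeval f) h
    rwa [key, key] at this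
  set gG : ↥G := ⟨g, hg⟩ with hgG
  have hren : rename (⇑g) (aeval Y E) = aeval Y (rename (⇑(φ gG)) E) := by
    rw [aeval_rename]
    have hc : (rename (⇑g)).comp (aeval Y) = aeval (Y ∘ ⇑(φ gG)) := by
      rw [comp_aeval Y (rename (⇑g))]
      congr 1
      funext i
      simp only [hY, map_sum, rename_X, Function.comp]
      rw [← Finset.sum_image (fun a _ c _ h => g.injective h)]
      rw [show Finset.image (⇑g) (B i) = B (φ gG i) from hφ gG i]
    have := congrFun (congrArg DFunLike.coe hc) E
    simpa only [AlgHom.comp_apply] using this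
  constructor
  · intro h
    have hEfix : rename (⇑(φ gG)) E = E := hinj _ _ (by rw [← hren]; exact h)
    obtain ⟨h', hh', hφh⟩ := (hE _ ⟨gG, rfl⟩).mp hEfix
    have hk : φ (gG * h'⁻¹) = 1 := by
      rw [map_mul, map_inv, hφh, mul_inv_cancel]
    have hmem := hker _ hk
    have : (gG : Equiv.Perm (Fin n)) * (h' : Equiv.Perm (Fin n))⁻¹ ∈ H := hmem
    have hg' : (h' : Equiv.Perm (Fin n)) ∈ H := hh'
    have := mul_mem this hg'
    simpa using this
  · intro hgH
    have hEfix : rename (⇑(φ gG)) E = E :=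
      (hE _ ⟨gG, rfl⟩).mpr ⟨gG, hgH, rfl⟩
    rw [hren, hEfix]
end

section
/- Let H ≤ G ≤ Sym(n) be transitive subgroups with a common block system B_1,…,B_m. Let Stab_H(B_1) and Stab_G(B_1) be the setwise stabilizers of the block B_1, and let H̃ := Stab_H(B_1)|_{B_1} and G̃ := Stab_G(B_1)|_{B_1} be the groups of permutations of B_1 induced by restriction. Assume (G : H) = (G̃ : H̃). Let E ∈ ℤ[X_j : j ∈ B_1] be a G̃-relative H̃-invariant (Stab_{G̃}(E) = H̃), and let σ_1,…,σ_m be a complete set of representatives of the right cosets of Stab_H(B_1) in H. Then F := E^{σ_1} + ⋯ + E^{σ_m} ∈ ℤ[X_1,…,X_n] is a G-relative H-invariant: Stab_G(F) = H. -/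
open MvPolynomial

/-- The (right) action `F ↦ F^σ` of `Sym(n)` on polynomials by permuting the variables.
It satisfies `(F^σ)^τ = F^{στ}`, so that, as in the paper, sums of `F^{σ_i}` over
representatives `σ_i` of *right* cosets are well behaved; up to the substitution
`σ ↦ σ⁻¹` it is the action `X_i ↦ X_{σ(i)}`, and it has the same stabilizers. -/
noncomputable def permAct {n : ℕ} (σ : Equiv.Perm (Fin n))
    (F : MvPolynomial (Fin n) ℤ) : MvPolynomial (Fin n) ℤ :=
  rename (⇑σ⁻¹) F


lemma permAct_permAct {n : ℕ} (σ τ : Equiv.Perm (Fin n)) (F : MvPolynomial (Fin n) ℤ) :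
    permAct σ (permAct τ F) = permAct (τ * σ) F := by
  simp only [permAct, rename_rename, mul_inv_rev, Equiv.Perm.coe_mul]

lemma permAct_injective {n : ℕ} (σ : Equiv.Perm (Fin n)) :
    Function.Injective (permAct σ) := by
  intro a b h
  exact rename_injective _ (Equiv.injective _) h

lemma rename_congr_vars {n : ℕ} {p : MvPolynomial (Fin n) ℤ} {f g : Fin n → Fin n}
    (h : ∀ i ∈ p.vars, f i = g i) : rename f p = rename g p := by
  have := hom_congr_vars (f₁ := (rename f : MvPolynomial (Fin n) ℤ →ₐ[ℤ] _).toRingHom)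
    (f₂ := (rename g : MvPolynomial (Fin n) ℤ →ₐ[ℤ] _).toRingHom)
    (p₁ := p) (p₂ := p) (Subsingleton.elim _ _) (fun i h1 _ => by simp [h i h1]) rfl
  simpa using this

lemma aeval_proj_of_vars_subset {n : ℕ} (s : Finset (Fin n)) (p : MvPolynomial (Fin n) ℤ)
    (h : ∀ i ∈ p.vars, i ∈ s) :
    aeval (fun x => if x ∈ s then (X x : MvPolynomial (Fin n) ℤ) else 0) p = p := by
  have := hom_congr_vars
    (f₁ := ((aeval (fun x => if x ∈ s then (X x : MvPolynomial (Fin n) ℤ) else 0)).toRingHom))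
    (f₂ := RingHom.id _) (p₁ := p) (p₂ := p)
    (Subsingleton.elim _ _) (fun i h1 _ => by simp [h i h1]) rfl
  simpa using this

lemma aeval_proj_of_vars_disjoint {n : ℕ} (s : Finset (Fin n)) (p : MvPolynomial (Fin n) ℤ)
    (h : ∀ i ∈ p.vars, i ∉ s) :
    aeval (fun x => if x ∈ s then (X x : MvPolynomial (Fin n) ℤ) else 0) p
      = C (constantCoeff p) := by
  have := hom_congr_vars
    (f₁ := ((aeval (fun x => if x ∈ s then (X x : MvPolynomial (Fin n) ℤ) else 0)).toRingHom))
    (f₂ := ((aeval (fun _ => 0 : Fin n → MvPolynomial (Fin n) ℤ)).toRingHom))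
    (p₁ := p) (p₂ := p)
    (Subsingleton.elim _ _) (fun i h1 _ => by simp [h i h1]) rfl
  simp only [AlgHom.toRingHom_eq_coe, RingHom.coe_coe] at this
  rw [this, aeval_zero', algebraMap_eq]


section
variable {n : ℕ}

def blockStab (s : Finset (Fin n)) : Subgroup (Equiv.Perm (Fin n)) where
  carrier := {g | s.image ⇑g = s}
  one_mem' := by simp
  mul_mem' := by
    intro a b ha hb
    simp only [Set.mem_setOf_eq] at *
    rw [Equiv.Perm.coe_mul, ← Finset.image_image, hb, ha]
  inv_mem' := by
    intro a ha
    simp only [Set.mem_setOf_eq] at *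
    conv_lhs => rw [← ha]
    rw [Finset.image_image]
    simp [Function.comp_def]

lemma mem_blockStab {s : Finset (Fin n)} {g : Equiv.Perm (Fin n)} :
    g ∈ blockStab s ↔ s.image ⇑g = s := Iff.rfl

lemma blockStab_mem_iff {s : Finset (Fin n)} {g : Equiv.Perm (Fin n)}
    (hg : s.image ⇑g = s) {x : Fin n} : g x ∈ s ↔ x ∈ s := by
  constructor
  · intro hx
    rw [← hg] at hx
    obtain ⟨y, hy, he⟩ := Finset.mem_image.mp hx
    rwa [← g.injective he]
  · intro hx
    rw [← hg]
    exact Finset.mem_image_of_mem _ hx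

noncomputable def restrictPerm (s : Finset (Fin n)) (g : ↥(blockStab s)) :
    Equiv.Perm (Fin n) where
  toFun := fun x => if x ∈ s then (g : Equiv.Perm (Fin n)) x else x
  invFun := fun x => if x ∈ s then ((g : Equiv.Perm (Fin n)))⁻¹ x else x
  left_inv := by
    intro x
    by_cases hx : x ∈ s
    · simp [hx, (blockStab_mem_iff g.2).mpr hx]
    · simp [hx]
  right_inv := by
    intro x
    by_cases hx : x ∈ s
    · have : ((g : Equiv.Perm (Fin n)))⁻¹ x ∈ s :=
        (blockStab_mem_iff (g := ((g : Equiv.Perm (Fin n)))⁻¹) (x := x)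
          (mem_blockStab.mp (inv_mem g.2))).mpr hx
      simp only [Equiv.Perm.inv_def] at this
      simp [hx, this]
    · simp [hx]

lemma restrictPerm_apply (s : Finset (Fin n)) (g : ↥(blockStab s)) (x : Fin n) :
    restrictPerm s g x = if x ∈ s then (g : Equiv.Perm (Fin n)) x else x := rfl

noncomputable def restrictHom (s : Finset (Fin n)) :
    ↥(blockStab s) →* Equiv.Perm (Fin n) :=
  MonoidHom.mk' (restrictPerm s) (by
    intro a b
    ext x
    by_cases hx : x ∈ s
    · have hbx : (b : Equiv.Perm (Fin n)) x ∈ s := (blockStab_mem_iff b.2).mpr hx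
      simp [restrictPerm_apply, hx, hbx]
    · simp [restrictPerm_apply, hx])

lemma restrictHom_apply (s : Finset (Fin n)) (g : ↥(blockStab s)) (x : Fin n) :
    restrictHom s g x = if x ∈ s then (g : Equiv.Perm (Fin n)) x else x := rfl

lemma restrictHom_mem_blockStab (s : Finset (Fin n)) (g : ↥(blockStab s)) :
    restrictHom s g ∈ blockStab s := by
  rw [mem_blockStab]
  ext x
  constructor
  · intro hx
    obtain ⟨y, hy, he⟩ := Finset.mem_image.mp hx
    rw [restrictHom_apply, if_pos hy] at he
    rw [← he]
    exact (blockStab_mem_iff g.2).mpr hy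
  · intro hx
    have hx' : ((g : Equiv.Perm (Fin n)))⁻¹ x ∈ s :=
      (blockStab_mem_iff (g := ((g : Equiv.Perm (Fin n)))⁻¹) (x := x)
        (mem_blockStab.mp (inv_mem g.2))).mpr hx
    refine Finset.mem_image.mpr ⟨((g : Equiv.Perm (Fin n)))⁻¹ x, hx', ?_⟩
    rw [restrictHom_apply, if_pos hx']
    simp

lemma restrictHom_inv_apply (s : Finset (Fin n)) (g : ↥(blockStab s)) {x : Fin n}
    (hx : x ∈ s) : (restrictHom s g)⁻¹ x = ((g : Equiv.Perm (Fin n)))⁻¹ x := by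
  apply (restrictHom s g).injective
  rw [← Equiv.Perm.mul_apply, mul_inv_cancel, Equiv.Perm.one_apply]
  have hx' : ((g : Equiv.Perm (Fin n)))⁻¹ x ∈ s :=
    (blockStab_mem_iff (g := ((g : Equiv.Perm (Fin n)))⁻¹) (x := x)
      (mem_blockStab.mp (inv_mem g.2))).mpr hx
  rw [restrictHom_apply, if_pos hx']
  simp

def pointFix (s : Finset (Fin n)) : Subgroup (Equiv.Perm (Fin n)) where
  carrier := {g | ∀ y ∈ s, g y = y}
  one_mem' := by simp
  mul_mem' := by
    intro a b ha hb y hy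
    simp only [Equiv.Perm.coe_mul, Function.comp_apply, hb y hy, ha y hy]
  inv_mem' := by
    intro a ha y hy
    have := ha y hy
    nth_rewrite 1 [← this]
    simp

/-- The canonical map for a subgroup `P`: restriction of `restrictHom`
to `(P ⊓ blockStab s).subgroupOf (blockStab s)`. -/
noncomputable def resOf (s : Finset (Fin n)) (P : Subgroup (Equiv.Perm (Fin n))) :
    ↥((P ⊓ blockStab s).subgroupOf (blockStab s)) →* Equiv.Perm (Fin n) :=
  (restrictHom s).comp (Subgroup.subtype _)

lemma resOf_range (s : Finset (Fin n)) (P P' : Subgroup (Equiv.Perm (Fin n)))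
    (hP' : ∀ τ : Equiv.Perm (Fin n), τ ∈ P' ↔
      ((∀ x ∉ s, τ x = x) ∧
        ∃ σ ∈ P, Finset.image (⇑σ) s = s ∧ ∀ x ∈ s, σ x = τ x)) :
    (resOf s P).range = P' := by
  ext τ
  rw [MonoidHom.mem_range, hP']
  constructor
  · rintro ⟨x, rfl⟩
    obtain ⟨hxP, hxbs⟩ := Subgroup.mem_subgroupOf.mp x.2
    refine ⟨fun y hy => by rw [resOf, MonoidHom.comp_apply, restrictHom_apply, if_neg hy],
      (x : ↥(blockStab s)), hxP, (x : ↥(blockStab s)).2, fun y hy => ?_⟩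
    rw [resOf, MonoidHom.comp_apply, restrictHom_apply, if_pos hy]
    rfl
  · rintro ⟨hout, σ, hσP, hσbs, hagree⟩
    refine ⟨⟨⟨σ, hσbs⟩, Subgroup.mem_subgroupOf.mpr ⟨hσP, hσbs⟩⟩, ?_⟩
    refine Equiv.ext fun x => ?_
    rw [resOf, MonoidHom.comp_apply, restrictHom_apply]
    by_cases hx : x ∈ s
    · rw [if_pos hx]
      exact hagree x hx
    · rw [if_neg hx, hout x hx]

lemma mem_ker_resOf (s : Finset (Fin n)) (P : Subgroup (Equiv.Perm (Fin n)))
    (x : ↥((P ⊓ blockStab s).subgroupOf (blockStab s))) :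
    x ∈ (resOf s P).ker ↔ (x : Equiv.Perm (Fin n)) ∈ pointFix s := by
  rw [MonoidHom.mem_ker]
  constructor
  · intro h y hy
    have := Equiv.ext_iff.mp h y
    rw [resOf, MonoidHom.comp_apply, restrictHom_apply, if_pos hy] at this
    simpa using this
  · intro h
    refine Equiv.ext fun y => ?_
    rw [resOf, MonoidHom.comp_apply, restrictHom_apply]
    by_cases hy : y ∈ s
    · rw [if_pos hy]
      simpa using h y hy
    · rw [if_neg hy]
      rfl

lemma resOf_ker_card (s : Finset (Fin n)) (P : Subgroup (Equiv.Perm (Fin n))) :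
    Nat.card (resOf s P).ker = Nat.card ↥(P ⊓ blockStab s ⊓ pointFix s) := by
  apply Nat.card_congr
  refine ⟨fun x => ⟨((x : ↥((P ⊓ blockStab s).subgroupOf (blockStab s))) :
      Equiv.Perm (Fin n)), Subgroup.mem_inf.mpr
        ⟨Subgroup.mem_subgroupOf.mp (x : ↥((P ⊓ blockStab s).subgroupOf (blockStab s))).2,
          (mem_ker_resOf s P _).mp x.2⟩⟩,
    fun y => ⟨⟨⟨(y : Equiv.Perm (Fin n)), (Subgroup.mem_inf.mp (Subgroup.mem_inf.mp y.2).1).2⟩,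
      Subgroup.mem_subgroupOf.mpr (Subgroup.mem_inf.mp y.2).1⟩,
      (mem_ker_resOf s P _).mpr (Subgroup.mem_inf.mp y.2).2⟩,
    fun x => rfl, fun y => rfl⟩

end

open Pointwise in
lemma card_transitive_blocks {m : ℕ} (hm : 0 < m) (P : Subgroup (Equiv.Perm (Fin n)))
    (B : Fin m → Finset (Fin n)) (hne : ∀ i, (B i).Nonempty)
    (hdisj : ∀ i j, i ≠ j → Disjoint (B i) (B j))
    (htrans : ∀ a b : Fin n, ∃ σ ∈ P, σ a = b)
    (hblocks : ∀ g ∈ P, ∀ i, ∃ j, Finset.image (⇑g) (B i) = B j) :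
    Nat.card ↥P = m * Nat.card ↥(P ⊓ blockStab (B ⟨0, hm⟩)) := by
  classical
  set B1 := B ⟨0, hm⟩ with hB1
  have hsmul : ∀ (g : ↥P) (s : Finset (Fin n)), g • s = s.image ⇑(g : Equiv.Perm (Fin n)) := by
    intro g s
    rw [Finset.smul_finset_def]
    rfl
  have blocksEq : ∀ i j, (∃ x, x ∈ B i ∧ x ∈ B j) → i = j := by
    intro i j ⟨x, hxi, hxj⟩
    by_contra hne'
    exact Finset.disjoint_left.mp (hdisj i j hne') hxi hxj
  have Binj : Function.Injective B := by
    intro i j hij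
    obtain ⟨x, hx⟩ := hne i
    exact blocksEq i j ⟨x, hx, hij ▸ hx⟩
  have horb : MulAction.orbit ↥P B1 = Set.range B := by
    ext s
    constructor
    · rintro ⟨g, rfl⟩
      show g • B1 ∈ Set.range B
      rw [hsmul]
      obtain ⟨j, hj⟩ := hblocks (g : Equiv.Perm (Fin n)) g.2 ⟨0, hm⟩
      exact ⟨j, hj.symm⟩
    · rintro ⟨i, rfl⟩
      obtain ⟨y, hy⟩ := hne ⟨0, hm⟩
      obtain ⟨x, hx⟩ := hne i
      obtain ⟨σ, hσP, hσ⟩ := htrans y x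
      obtain ⟨j, hj⟩ := hblocks σ hσP ⟨0, hm⟩
      have : j = i := by
        apply blocksEq
        exact ⟨x, hj ▸ (by rw [← hσ]; exact Finset.mem_image_of_mem _ hy), hx⟩
      refine ⟨⟨σ, hσP⟩, ?_⟩
      show (⟨σ, hσP⟩ : ↥P) • B1 = B i
      rw [hsmul, hB1]
      simp only []
      rw [hj, this]
  have hidx : (MulAction.stabilizer ↥P B1).index = m := by
    rw [MulAction.index_stabilizer, horb, ← Nat.card_coe_set_eq,
      Nat.card_range_of_injective Binj]
    simp
  have hstab : MulAction.stabilizer ↥P B1 = (P ⊓ blockStab B1).subgroupOf P := by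
    ext g
    rw [MulAction.mem_stabilizer_iff, Subgroup.mem_subgroupOf, Subgroup.mem_inf, hsmul]
    exact ⟨fun h => ⟨g.2, h⟩, fun h => h.2⟩
  have := Subgroup.index_mul_card (MulAction.stabilizer ↥P B1)
  rw [hidx, hstab] at this
  rw [← this]
  congr 1
  exact Nat.card_congr (Subgroup.subgroupOfEquivOfLe inf_le_left).toEquiv

lemma card_inf_blockStab (s : Finset (Fin n)) (P P' : Subgroup (Equiv.Perm (Fin n)))
    (hP' : ∀ τ : Equiv.Perm (Fin n), τ ∈ P' ↔
      ((∀ x ∉ s, τ x = x) ∧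
        ∃ σ ∈ P, Finset.image (⇑σ) s = s ∧ ∀ x ∈ s, σ x = τ x)) :
    Nat.card ↥(P ⊓ blockStab s)
      = Nat.card ↥P' * Nat.card ↥(P ⊓ blockStab s ⊓ pointFix s) := by
  have e1 : Nat.card ↥(P ⊓ blockStab s)
      = Nat.card ↥((P ⊓ blockStab s).subgroupOf (blockStab s)) :=
    Nat.card_congr (Subgroup.subgroupOfEquivOfLe inf_le_right).toEquiv.symm
  rw [e1, Subgroup.card_eq_card_quotient_mul_card_subgroup (resOf s P).ker,
    Nat.card_congr (QuotientGroup.quotientKerEquivRange (resOf s P)).toEquiv,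
    resOf_range s P P' hP', resOf_ker_card]

lemma key_group {m : ℕ} (hm : 0 < m)
    (G H : Subgroup (Equiv.Perm (Fin n))) (hHG : H ≤ G)
    (hHtrans : ∀ a b : Fin n, ∃ σ ∈ H, σ a = b)
    (hGtrans : ∀ a b : Fin n, ∃ σ ∈ G, σ a = b)
    (B : Fin m → Finset (Fin n))
    (hne : ∀ i, (B i).Nonempty)
    (hdisj : ∀ i j, i ≠ j → Disjoint (B i) (B j))
    (hGblocks : ∀ g ∈ G, ∀ i, ∃ j, Finset.image (⇑g) (B i) = B j)
    (G' H' : Subgroup (Equiv.Perm (Fin n)))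
    (hG' : ∀ τ : Equiv.Perm (Fin n), τ ∈ G' ↔
      ((∀ x ∉ B ⟨0, hm⟩, τ x = x) ∧
        ∃ σ ∈ G, Finset.image (⇑σ) (B ⟨0, hm⟩) = B ⟨0, hm⟩ ∧ ∀ x ∈ B ⟨0, hm⟩, σ x = τ x))
    (hH' : ∀ τ : Equiv.Perm (Fin n), τ ∈ H' ↔
      ((∀ x ∉ B ⟨0, hm⟩, τ x = x) ∧
        ∃ σ ∈ H, Finset.image (⇑σ) (B ⟨0, hm⟩) = B ⟨0, hm⟩ ∧ ∀ x ∈ B ⟨0, hm⟩, σ x = τ x))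
    (hidx : H.relIndex G = H'.relIndex G') :
    ∀ ρ ∈ G, ∀ hbs : ρ ∈ blockStab (B ⟨0, hm⟩),
      restrictHom (B ⟨0, hm⟩) ⟨ρ, hbs⟩ ∈ H' → ρ ∈ H := by
  intro ρ hρG hbs hρH'
  set s := B ⟨0, hm⟩ with hs
  have hHblocks : ∀ g ∈ H, ∀ i, ∃ j, Finset.image (⇑g) (B i) = B j :=
    fun g hg => hGblocks g (hHG hg)
  have h1 := card_transitive_blocks hm G B hne hdisj hGtrans hGblocks
  have h2 := card_transitive_blocks hm H B hne hdisj hHtrans hHblocks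
  have h3 := card_inf_blockStab s G G' hG'
  have h4 := card_inf_blockStab s H H' hH'
  have h5 : H.relIndex G * Nat.card ↥H = Nat.card ↥G := by
    have := Subgroup.index_mul_card (H.subgroupOf G)
    rwa [Nat.card_congr (Subgroup.subgroupOfEquivOfLe hHG).toEquiv] at this
  have hH'G' : H' ≤ G' := by
    intro τ hτ
    obtain ⟨hout, σ, hσ, h1', h2'⟩ := (hH' τ).mp hτ
    exact (hG' τ).mpr ⟨hout, σ, hHG hσ, h1', h2'⟩
  have h6 : H'.relIndex G' * Nat.card ↥H' = Nat.card ↥G' := by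
    have := Subgroup.index_mul_card (H'.subgroupOf G')
    rwa [Nat.card_congr (Subgroup.subgroupOfEquivOfLe hH'G').toEquiv] at this
  -- positivity
  have hd : 0 < H.relIndex G := by
    rcases Nat.eq_zero_or_pos (H.relIndex G) with h | h
    · rw [h, zero_mul] at h5
      exact absurd h5.symm (Nat.card_pos (α := ↥G)).ne'
    · exact h
  have hcH' : 0 < Nat.card ↥H' := Nat.card_pos
  -- derive kernel cardinality equality
  have hker : Nat.card ↥(G ⊓ blockStab s ⊓ pointFix s)
      = Nat.card ↥(H ⊓ blockStab s ⊓ pointFix s) := by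
    have e : H.relIndex G * (m * (Nat.card ↥H' * Nat.card ↥(H ⊓ blockStab s ⊓ pointFix s)))
        = H.relIndex G * (m * (Nat.card ↥H' * Nat.card ↥(G ⊓ blockStab s ⊓ pointFix s))) := by
      calc H.relIndex G * (m * (Nat.card ↥H' * Nat.card ↥(H ⊓ blockStab s ⊓ pointFix s)))
          = H.relIndex G * Nat.card ↥H := by rw [h2, h4]
        _ = Nat.card ↥G := h5
        _ = m * (Nat.card ↥G' * Nat.card ↥(G ⊓ blockStab s ⊓ pointFix s)) := by rw [h1, h3]
        _ = m * ((H'.relIndex G' * Nat.card ↥H') * Nat.card ↥(G ⊓ blockStab s ⊓ pointFix s)) := by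
            rw [h6]
        _ = H.relIndex G * (m * (Nat.card ↥H' * Nat.card ↥(G ⊓ blockStab s ⊓ pointFix s))) := by
            rw [hidx]; ring
    have := Nat.eq_of_mul_eq_mul_left hd e
    have := Nat.eq_of_mul_eq_mul_left hm this
    exact (Nat.eq_of_mul_eq_mul_left hcH' this).symm
  have hsub : H ⊓ blockStab s ⊓ pointFix s = G ⊓ blockStab s ⊓ pointFix s := by
    apply Subgroup.eq_of_le_of_card_ge
    · exact inf_le_inf_right _ (inf_le_inf_right _ hHG)
    · exact le_of_eq hker
  -- now the main argument
  have : restrictHom s ⟨ρ, hbs⟩ ∈ (resOf s H).range := by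
    rw [resOf_range s H H' hH']
    exact hρH'
  obtain ⟨σx, hσx⟩ := this
  set σ : Equiv.Perm (Fin n) := ((σx : ↥(blockStab s)) : Equiv.Perm (Fin n)) with hσdef
  have hσmem : σ ∈ H ⊓ blockStab s := Subgroup.mem_subgroupOf.mp σx.2
  have hagree : ∀ y ∈ s, σ y = ρ y := by
    intro y hy
    have := Equiv.ext_iff.mp hσx y
    rw [resOf, MonoidHom.comp_apply, restrictHom_apply, restrictHom_apply,
      if_pos hy, if_pos hy] at this
    exact this
  have hδ : ρ * σ⁻¹ ∈ G ⊓ blockStab s ⊓ pointFix s := by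
    refine Subgroup.mem_inf.mpr ⟨Subgroup.mem_inf.mpr
      ⟨mul_mem hρG (inv_mem (hHG hσmem.1)), mul_mem hbs (inv_mem hσmem.2)⟩, ?_⟩
    intro y hy
    have hy' : σ⁻¹ y ∈ s :=
      (blockStab_mem_iff (g := σ⁻¹) (x := y) (mem_blockStab.mp (inv_mem hσmem.2))).mpr hy
    have : ρ (σ⁻¹ y) = σ (σ⁻¹ y) := (hagree _ hy').symm
    simpa using this
  rw [← hsub] at hδ
  have : (ρ * σ⁻¹) * σ ∈ H := mul_mem (Subgroup.mem_inf.mp (Subgroup.mem_inf.mp hδ).1).1 hσmem.1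
  simpa using this

section MainAux
variable {n : ℕ}

lemma image_mul_perm (a b : Equiv.Perm (Fin n)) (s : Finset (Fin n)) :
    s.image ⇑(a * b) = (s.image ⇑b).image ⇑a := by
  rw [Finset.image_image, Equiv.Perm.coe_mul]

lemma image_inv_image (a : Equiv.Perm (Fin n)) (s : Finset (Fin n)) :
    (s.image ⇑a).image ⇑a⁻¹ = s := by
  rw [Finset.image_image]
  simp [Function.comp_def]

lemma image_image_inv (a : Equiv.Perm (Fin n)) (s : Finset (Fin n)) :
    (s.image ⇑a⁻¹).image ⇑a = s := by
  rw [Finset.image_image]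
  simp [Function.comp_def]

lemma sum_ite_single {α M : Type*} [Fintype α] [DecidableEq α] [AddCommGroup M]
    (a : α) (p q : M) :
    ∑ k, (if k = a then p else q) = (Fintype.card α) • q + (p - q) := by
  have h : ∀ k : α, (if k = a then p else q) = q + (if k = a then p - q else 0) := by
    intro k
    by_cases h : k = a <;> simp [h]
  rw [Finset.sum_congr rfl fun k _ => h k, Finset.sum_add_distrib]
  simp [Finset.sum_ite_eq']

end MainAux

/-- Let `H ≤ G ≤ Sym(n)` be transitive subgroups with a common block
system `B_1,…,B_m`.  Let `H̃ := Stab_H(B_1)|_{B_1}` and `G̃ := Stab_G(B_1)|_{B_1}` be the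
permutation groups of the block `B_1` induced by the setwise stabilizers of `B_1`; here
they are modelled faithfully as the subgroups `H'`, `G'` of `Sym(n)` consisting of the
permutations that fix every point outside `B_1` and agree on `B_1` with some element of
`Stab_H(B_1)` (resp. `Stab_G(B_1)`).  Assume `(G : H) = (G̃ : H̃)`.  Let
`E ∈ ℤ[X_j : j ∈ B_1]` (i.e. a polynomial all of whose variables lie in `B_1`) be a
`G̃`-relative `H̃`-invariant (`Stab_{G̃}(E) = H̃`), and let `σ_1,…,σ_m` be a complete set
of representatives of the right cosets of `Stab_H(B_1)` in `H`.  Then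
`F := E^{σ_1} + ⋯ + E^{σ_m}` is a `G`-relative `H`-invariant: `Stab_G(F) = H`. -/
theorem statement9 (n m : ℕ) (hm : 0 < m)
    (G H : Subgroup (Equiv.Perm (Fin n))) (hHG : H ≤ G)
    (hHtrans : ∀ a b : Fin n, ∃ σ ∈ H, σ a = b)
    (hGtrans : ∀ a b : Fin n, ∃ σ ∈ G, σ a = b)
    (B : Fin m → Finset (Fin n))
    (hne : ∀ i, (B i).Nonempty)
    (hdisj : ∀ i j, i ≠ j → Disjoint (B i) (B j))
    (hcover : ∀ x : Fin n, ∃ i, x ∈ B i)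
    (hGblocks : ∀ g ∈ G, ∀ i, ∃ j, Finset.image (⇑g) (B i) = B j)
    (G' H' : Subgroup (Equiv.Perm (Fin n)))
    (hG' : ∀ τ : Equiv.Perm (Fin n), τ ∈ G' ↔
      ((∀ x ∉ B ⟨0, hm⟩, τ x = x) ∧
        ∃ σ ∈ G, Finset.image (⇑σ) (B ⟨0, hm⟩) = B ⟨0, hm⟩ ∧ ∀ x ∈ B ⟨0, hm⟩, σ x = τ x))
    (hH' : ∀ τ : Equiv.Perm (Fin n), τ ∈ H' ↔
      ((∀ x ∉ B ⟨0, hm⟩, τ x = x) ∧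
        ∃ σ ∈ H, Finset.image (⇑σ) (B ⟨0, hm⟩) = B ⟨0, hm⟩ ∧ ∀ x ∈ B ⟨0, hm⟩, σ x = τ x))
    (hidx : H.relIndex G = H'.relIndex G')
    (E : MvPolynomial (Fin n) ℤ)
    (hEvars : E.vars ⊆ B ⟨0, hm⟩)
    (hE : ∀ τ ∈ G', (permAct τ E = E ↔ τ ∈ H'))
    (σs : Fin m → Equiv.Perm (Fin n))
    (hσH : ∀ k, σs k ∈ H)
    (hreps : ∀ h ∈ H, ∃! k : Fin m,
      h * (σs k)⁻¹ ∈ H ∧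
        Finset.image (⇑(h * (σs k)⁻¹)) (B ⟨0, hm⟩) = B ⟨0, hm⟩) :
    ∀ g ∈ G,
      (permAct g (∑ k : Fin m, permAct (σs k) E) = ∑ k : Fin m, permAct (σs k) E
        ↔ g ∈ H) := by
  classical
  intro g hg
  set s : Finset (Fin n) := B ⟨0, hm⟩ with hsdef
  have hHblocks : ∀ h ∈ H, ∀ i, ∃ j, Finset.image (⇑h) (B i) = B j :=
    fun h hh => hGblocks h (hHG hh)
  have blocksEq : ∀ i j, (∃ x, x ∈ B i ∧ x ∈ B j) → i = j := by
    intro i j ⟨x, hxi, hxj⟩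
    by_contra hne'
    exact Finset.disjoint_left.mp (hdisj i j hne') hxi hxj
  -- bridge between permAct of ρ and of its restriction
  have bridge : ∀ (ρ : Equiv.Perm (Fin n)) (hbs : ρ ∈ blockStab s),
      permAct ρ E = permAct (restrictHom s ⟨ρ, hbs⟩) E := by
    intro ρ hbs
    apply rename_congr_vars
    intro i hi
    exact (restrictHom_inv_apply s ⟨ρ, hbs⟩ (hEvars hi)).symm
  -- invariance under block-stabilizing elements of H
  have INV : ∀ ρ ∈ H, ∀ hbs : ρ ∈ blockStab s, permAct ρ E = E := by
    intro ρ hρ hbs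
    have hmem : (⟨ρ, hbs⟩ : ↥(blockStab s)) ∈ (H ⊓ blockStab s).subgroupOf (blockStab s) :=
      Subgroup.mem_subgroupOf.mpr (Subgroup.mem_inf.mpr ⟨hρ, hbs⟩)
    have hrmem : restrictHom s ⟨ρ, hbs⟩ ∈ H' := by
      rw [← resOf_range s H H' hH']
      exact ⟨⟨⟨ρ, hbs⟩, hmem⟩, rfl⟩
    have hG'mem : restrictHom s ⟨ρ, hbs⟩ ∈ G' := by
      obtain ⟨hout, σ, hσ, h1', h2'⟩ := (hH' _).mp hrmem
      exact (hG' _).mpr ⟨hout, σ, hHG hσ, h1', h2'⟩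
    rw [bridge ρ hbs]
    exact (hE _ hG'mem).mpr hrmem
  -- key injectivity of k ↦ (σs k)⁻¹ '' B₁
  have hinj : ∀ k k' : Fin m,
      s.image ⇑(σs k)⁻¹ = s.image ⇑(σs k')⁻¹ → k = k' := by
    intro k k' hkk'
    obtain ⟨t, _, huniq⟩ := hreps (σs k) (hσH k)
    have h1 : k = t := by
      apply huniq
      refine ⟨by rw [mul_inv_cancel]; exact one_mem H, ?_⟩
      rw [mul_inv_cancel]
      simp
    have h2 : k' = t := by
      apply huniq
      refine ⟨mul_mem (hσH k) (inv_mem (hσH k')), ?_⟩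
      rw [image_mul_perm, ← hkk', image_image_inv]
    rw [h1, h2]
  have hinj_g : ∀ (γ : Equiv.Perm (Fin n)) (k k' : Fin m),
      s.image ⇑(σs k * γ)⁻¹ = s.image ⇑(σs k' * γ)⁻¹ → k = k' := by
    intro γ k k' hkk'
    apply hinj
    apply Finset.image_injective (Equiv.injective γ⁻¹)
    rw [Finset.image_image, Finset.image_image]
    rw [mul_inv_rev, mul_inv_rev, Equiv.Perm.coe_mul, Equiv.Perm.coe_mul] at hkk'
    exact hkk'
  have hact : permAct g (∑ k : Fin m, permAct (σs k) E)
      = ∑ k : Fin m, permAct (σs k * g) E := by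
    show rename ⇑g⁻¹ _ = _
    rw [map_sum]
    exact Finset.sum_congr rfl fun k _ => permAct_permAct g (σs k) E
  constructor
  · -- forward direction
    intro heq
    rw [hact] at heq
    set k₀ : Fin m := ⟨0, hm⟩ with hk₀
    have hσk₀gG : σs k₀ * g ∈ G := mul_mem (hHG (hσH k₀)) hg
    obtain ⟨i, hi⟩ := hGblocks (σs k₀ * g)⁻¹ (inv_mem hσk₀gG) ⟨0, hm⟩
    -- find j with (σs j)⁻¹ '' s = B i
    obtain ⟨x, hx⟩ := hne i
    obtain ⟨y, hy⟩ := hne ⟨0, hm⟩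
    obtain ⟨σ, hσ, hσxy⟩ := hHtrans x y
    obtain ⟨j', hj'⟩ := hHblocks σ hσ i
    have hj'0 : j' = ⟨0, hm⟩ := by
      apply blocksEq
      exact ⟨y, hj' ▸ (by rw [← hσxy]; exact Finset.mem_image_of_mem _ hx), hy⟩
    have hσBi : (B i).image ⇑σ = s := by rw [hj', hj'0]
    obtain ⟨j, ⟨hjH, hjim⟩, _⟩ := hreps σ hσ
    have hj : s.image ⇑(σs j)⁻¹ = B i := by
      rw [image_mul_perm] at hjim
      -- hjim : (s.image ⇑(σs j)⁻¹).image ⇑σ = s ; and (B i).image σ = s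
      apply Finset.image_injective (Equiv.injective σ)
      rw [hjim, hσBi]
    -- the projection homomorphism
    set φ : MvPolynomial (Fin n) ℤ →ₐ[ℤ] MvPolynomial (Fin n) ℤ :=
      aeval (fun x => if x ∈ B i then (X x : MvPolynomial (Fin n) ℤ) else 0) with hφ
    have hvars : ∀ τ : Equiv.Perm (Fin n), (permAct τ E).vars ⊆ s.image ⇑τ⁻¹ := by
      intro τ
      intro v hv
      have := vars_rename (⇑τ⁻¹) E hv
      exact Finset.image_subset_image hEvars this
    have hconst : ∀ τ : Equiv.Perm (Fin n),
        constantCoeff (permAct τ E) = constantCoeff E := fun τ =>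
      constantCoeff_rename _ E
    have hφ_of_eq : ∀ τ : Equiv.Perm (Fin n), s.image ⇑τ⁻¹ = B i →
        φ (permAct τ E) = permAct τ E := by
      intro τ hτ
      apply aeval_proj_of_vars_subset
      intro v hv
      exact hτ ▸ hvars τ hv
    have hφ_of_ne : ∀ τ : Equiv.Perm (Fin n), τ ∈ G → s.image ⇑τ⁻¹ ≠ B i →
        φ (permAct τ E) = C (constantCoeff E) := by
      intro τ hτG hτ
      rw [← hconst τ]
      apply aeval_proj_of_vars_disjoint
      intro v hv
      obtain ⟨i', hi'⟩ := hGblocks τ⁻¹ (inv_mem hτG) ⟨0, hm⟩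
      have hii' : i' ≠ i := fun h => hτ (h ▸ hi')
      have hv' : v ∈ B i' := hi' ▸ hvars τ hv
      exact fun hvBi => Finset.disjoint_left.mp (hdisj i' i hii') hv' hvBi
    -- apply φ to both sides
    have hL : φ (∑ k : Fin m, permAct (σs k * g) E)
        = (Fintype.card (Fin m)) • C ((constantCoeff E : ℤ))
          + (permAct (σs k₀ * g) E - C (constantCoeff E)) := by
      rw [map_sum, ← sum_ite_single k₀ (permAct (σs k₀ * g) E) (C (constantCoeff E))]
      apply Finset.sum_congr rfl
      intro k _
      by_cases hk : k = k₀
      · rw [hk, if_pos rfl]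
        exact hφ_of_eq _ hi
      · rw [if_neg hk]
        apply hφ_of_ne _ (mul_mem (hHG (hσH k)) hg)
        intro hcon
        exact hk (hinj_g g k k₀ (by rw [hcon, hi]))
    have hR : φ (∑ k : Fin m, permAct (σs k) E)
        = (Fintype.card (Fin m)) • C ((constantCoeff E : ℤ))
          + (permAct (σs j) E - C (constantCoeff E)) := by
      rw [map_sum, ← sum_ite_single j (permAct (σs j) E) (C (constantCoeff E))]
      apply Finset.sum_congr rfl
      intro k _
      by_cases hk : k = j
      · rw [hk, if_pos rfl]
        exact hφ_of_eq _ hj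
      · rw [if_neg hk]
        apply hφ_of_ne _ (hHG (hσH k))
        intro hcon
        exact hk (hinj k j (by rw [hcon, hj]))
    have hPP : permAct (σs k₀ * g) E = permAct (σs j) E := by
      have := congrArg φ heq
      rw [hL, hR] at this
      have := add_left_cancel this
      exact sub_left_injective this
    -- now conclude
    set ρ : Equiv.Perm (Fin n) := (σs k₀ * g) * (σs j)⁻¹ with hρdef
    have hρG : ρ ∈ G := mul_mem hσk₀gG (inv_mem (hHG (hσH j)))
    have hρE : permAct ρ E = E := by
      apply permAct_injective (σs j)
      rw [permAct_permAct]
      have : ρ * σs j = σs k₀ * g := by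
        rw [hρdef, inv_mul_cancel_right]
      rw [this, hPP]
    have hbs : ρ ∈ blockStab s := by
      rw [mem_blockStab]
      have : (⇑ρ) = ⇑(σs k₀ * g) ∘ ⇑(σs j)⁻¹ := by
        rw [hρdef, Equiv.Perm.coe_mul]
      rw [this, ← Finset.image_image, hj, ← hi, image_image_inv]
    have hρH : ρ ∈ H := by
      have hmem : (⟨ρ, hbs⟩ : ↥(blockStab s)) ∈ (G ⊓ blockStab s).subgroupOf (blockStab s) :=
        Subgroup.mem_subgroupOf.mpr (Subgroup.mem_inf.mpr ⟨hρG, hbs⟩)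
      have hrG' : restrictHom s ⟨ρ, hbs⟩ ∈ G' := by
        rw [← resOf_range s G G' hG']
        exact ⟨⟨⟨ρ, hbs⟩, hmem⟩, rfl⟩
      have hrH' : restrictHom s ⟨ρ, hbs⟩ ∈ H' := by
        rw [← hE _ hrG', ← bridge ρ hbs]
        exact hρE
      exact key_group hm G H hHG hHtrans hGtrans B hne hdisj hGblocks G' H' hG' hH' hidx
        ρ hρG hbs hrH'
    have : (σs k₀)⁻¹ * ρ * σs j = g := by rw [hρdef]; group
    rw [← this]
    exact mul_mem (mul_mem (inv_mem (hσH k₀)) hρH) (hσH j)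
  · -- reverse direction
    intro hgH
    rw [hact]
    have hmem : ∀ k, σs k * g ∈ H := fun k => mul_mem (hσH k) hgH
    choose jmap hj1 hj2 using fun k => (hreps (σs k * g) (hmem k)).exists
    have hptE : ∀ k, permAct (σs k * g) E = permAct (σs (jmap k)) E := by
      intro k
      have hbs : (σs k * g) * (σs (jmap k))⁻¹ ∈ blockStab s := mem_blockStab.mpr (hj2 k)
      have hE' := INV _ (hj1 k) hbs
      calc permAct (σs k * g) E
          = permAct (((σs k * g) * (σs (jmap k))⁻¹) * σs (jmap k)) E := by
            rw [inv_mul_cancel_right]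
        _ = permAct (σs (jmap k)) (permAct ((σs k * g) * (σs (jmap k))⁻¹) E) :=
            (permAct_permAct _ _ E).symm
        _ = permAct (σs (jmap k)) E := by rw [hE']
    have he : ∀ k, s.image ⇑(σs (jmap k))⁻¹ = s.image ⇑(σs k * g)⁻¹ := by
      intro k
      have h2 := hj2 k
      rw [image_mul_perm] at h2
      apply Finset.image_injective (Equiv.injective (σs k * g))
      rw [h2, image_image_inv]
    have hjinj : Function.Injective jmap := by
      intro k k' hkk'
      apply hinj_g g
      rw [← he k, ← he k', hkk']
    have hbij : Function.Bijective jmap := Finite.injective_iff_bijective.mp hjinj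
    calc ∑ k : Fin m, permAct (σs k * g) E
        = ∑ k : Fin m, permAct (σs (jmap k)) E :=
          Finset.sum_congr rfl fun k _ => hptE k
      _ = ∑ k : Fin m, permAct (σs k) E :=
          Fintype.sum_bijective jmap hbij _ _ (fun k => rfl)
end

section
/- Let d, m ≥ 1, let U ≤ Sym(d) and V ≤ Sym(m), and let G ≤ Sym({1,…,d} × {1,…,m}) be the imprimitive wreath product U ≀ V, i.e., the group of all permutations π of the pairs (i,j) of the form π(i,j) = (u_j(i), v(j)) with v ∈ V and u_1,…,u_m ∈ U. Let N be a normal subgroup of U of index 2, and let E ∈ ℤ[X_1,…,X_d] be a U-relative N-invariant (Stab_U(E) = N) with the property that E^u = −E for all u ∈ U∖N. For 1 ≤ j ≤ m set d_j := E(X_{1,j},…,X_{d,j}) ∈ ℤ[X_{i,j} : 1≤i≤d, 1≤j≤m], and set F := d_1 ⋯ d_m. Then H := Stab_G(F) is a subgroup of index 2 in G; in particular F is a G-relative H-invariant for an index-2 subgroup H of G. -/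
open MvPolynomial

/-- Let `d, m ≥ 1`, `U ≤ Sym(d)`, `V ≤ Sym(m)`, and let
`G ≤ Sym({1,…,d} × {1,…,m})` be the imprimitive wreath product `U ≀ V`, i.e. the group of
all permutations `π` of the pairs `(i,j)` of the form `π(i,j) = (u_j(i), v(j))` with
`v ∈ V` and `u_1,…,u_m ∈ U`.  Let `N ⊴ U` be a normal subgroup of index 2 and let
`E ∈ ℤ[X_1,…,X_d]` be a `U`-relative `N`-invariant (`Stab_U(E) = N`) with `E^u = −E` for
all `u ∈ U∖N`.  For each `j` set `d_j := E(X_{1,j},…,X_{d,j})` and `F := d_1 ⋯ d_m`.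
Then `H := Stab_G(F)` is a subgroup of index 2 in `G`; in particular `F` is a
`G`-relative `H`-invariant for an index-2 subgroup `H` of `G`.  The action on
polynomials is `X_i ↦ X_{σ(i)}` (`MvPolynomial.rename σ`); indices are
`Subgroup.relindex`. -/
theorem statement10 (d m : ℕ) (hd : 1 ≤ d) (hm : 1 ≤ m)
    (U : Subgroup (Equiv.Perm (Fin d))) (V : Subgroup (Equiv.Perm (Fin m)))
    (G : Subgroup (Equiv.Perm (Fin d × Fin m)))
    (hG : ∀ π : Equiv.Perm (Fin d × Fin m), π ∈ G ↔
      ∃ (v : Equiv.Perm (Fin m)) (u : Fin m → Equiv.Perm (Fin d)),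
        v ∈ V ∧ (∀ j, u j ∈ U) ∧ ∀ p : Fin d × Fin m, π p = (u p.2 p.1, v p.2))
    (N : Subgroup (Equiv.Perm (Fin d)))
    (hNU : N ≤ U)
    (hNnormal : ∀ u ∈ U, ∀ x ∈ N, u * x * u⁻¹ ∈ N)
    (hNidx : N.relIndex U = 2)
    (E : MvPolynomial (Fin d) ℤ)
    (hE : ∀ u ∈ U, (rename (⇑u) E = E ↔ u ∈ N))
    (hEneg : ∀ u ∈ U, u ∉ N → rename (⇑u) E = -E) :
    ∃ H : Subgroup (Equiv.Perm (Fin d × Fin m)),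
      H ≤ G ∧
      (∀ g : Equiv.Perm (Fin d × Fin m), g ∈ H ↔
        (g ∈ G ∧ rename (⇑g) (∏ j : Fin m, rename (fun i => (i, j)) E)
          = ∏ j : Fin m, rename (fun i => (i, j)) E)) ∧
      H.relIndex G = 2 := by
  classical
  set F : MvPolynomial (Fin d × Fin m) ℤ :=
    ∏ j : Fin m, rename (fun i => (i, j)) E with hFdef
  -- E ≠ 0
  obtain ⟨u0, hu0U, hu0N⟩ : ∃ u ∈ U, u ∉ N := by
    by_contra h
    push_neg at h
    have : N.relIndex U = 1 := by
      rw [Subgroup.relIndex, Subgroup.subgroupOf_eq_top.2 h, Subgroup.index_top]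
    omega
  have hE0 : E ≠ 0 := by
    intro h
    exact hu0N ((hE u0 hu0U).1 (by simp [h]))
  have hF0 : F ≠ 0 := by
    rw [hFdef, Finset.prod_ne_zero_iff]
    intro j _ h
    apply hE0
    have hinj : Function.Injective (fun i : Fin d => (i, j)) := by
      intro a b hab; simpa using hab
    exact rename_injective _ hinj (by simpa using h)
  have hFne : F ≠ -F := by
    intro h
    exact hF0 (add_self_eq_zero.mp (eq_neg_iff_add_eq_zero.mp h))
  -- key computation
  have key : ∀ (v : Equiv.Perm (Fin m)) (u : Fin m → Equiv.Perm (Fin d))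
      (g : Equiv.Perm (Fin d × Fin m)), (∀ j, u j ∈ U) →
      (∀ p : Fin d × Fin m, g p = (u p.2 p.1, v p.2)) →
      rename (⇑g) F = C (∏ j : Fin m, if u j ∈ N then (1:ℤ) else -1) * F := by
    intro v u g hu hgp
    rw [hFdef, map_prod]
    have step : ∀ j : Fin m, rename (⇑g) (rename (fun i => (i, j)) E)
        = C (if u j ∈ N then (1:ℤ) else -1) * rename (fun i => (i, v j)) E := by
      intro j
      rw [rename_rename]
      have hcomp : (⇑g ∘ fun i : Fin d => (i, j)) = (fun i : Fin d => (i, v j)) ∘ ⇑(u j) := by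
        funext i; simp [hgp (i, j)]
      rw [hcomp, ← rename_rename]
      by_cases hj : u j ∈ N
      · rw [(hE (u j) (hu j)).2 hj]; simp [hj]
      · rw [hEneg (u j) (hu j) hj]; simp [hj]
    calc (∏ j : Fin m, rename (⇑g) (rename (fun i => (i, j)) E))
        = ∏ j : Fin m, C (if u j ∈ N then (1:ℤ) else -1) * rename (fun i => (i, v j)) E := by
          exact Finset.prod_congr rfl fun j _ => step j
      _ = (∏ j : Fin m, C (if u j ∈ N then (1:ℤ) else -1))
            * ∏ j : Fin m, rename (fun i => (i, v j)) E := Finset.prod_mul_distrib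
      _ = C (∏ j : Fin m, if u j ∈ N then (1:ℤ) else -1) * F := by
          rw [← map_prod, hFdef, Equiv.prod_comp v (fun j => rename (fun i => (i, j)) E)]
  -- dichotomy
  have dich : ∀ g ∈ G, rename (⇑g) F = F ∨ rename (⇑g) F = -F := by
    intro g hg
    obtain ⟨v, u, hv, hu, hgp⟩ := (hG g).1 hg
    rw [key v u g hu hgp]
    have : (∏ j : Fin m, if u j ∈ N then (1:ℤ) else -1) = 1
        ∨ (∏ j : Fin m, if u j ∈ N then (1:ℤ) else -1) = -1 := by
      apply Finset.prod_induction _ (fun a => a = 1 ∨ a = -1)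
      · rintro a b (rfl | rfl) (rfl | rfl) <;> simp
      · left; rfl
      · intro j _; by_cases hj : u j ∈ N <;> simp [hj]
    rcases this with h | h <;> rw [h] <;> simp
  -- the subgroup H
  refine ⟨{
    carrier := {g | g ∈ G ∧ rename (⇑g) F = F}
    one_mem' := ⟨G.one_mem, by simp⟩
    mul_mem' := ?_
    inv_mem' := ?_ }, ?_, ?_, ?_⟩
  · rintro a b ⟨haG, haF⟩ ⟨hbG, hbF⟩
    refine ⟨G.mul_mem haG hbG, ?_⟩
    rw [show ⇑(a * b) = ⇑a ∘ ⇑b from rfl, ← rename_rename, hbF, haF]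
  · rintro a ⟨haG, haF⟩
    refine ⟨G.inv_mem haG, ?_⟩
    conv_lhs => rw [← haF]
    rw [rename_rename, show (⇑a⁻¹ ∘ ⇑a) = id from funext fun x => by simp, rename_id, AlgHom.id_apply]
  · intro g hg; exact hg.1
  · intro g; exact Iff.rfl
  -- index 2
  · rw [Subgroup.relIndex]
    rw [Subgroup.index_eq_two_iff]
    -- the odd element
    set j0 : Fin m := ⟨0, hm⟩ with hj0
    set w : Fin m → Equiv.Perm (Fin d) := fun j => if j = j0 then u0 else 1 with hw
    set π : Equiv.Perm (Fin d × Fin m) :=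
      { toFun := fun p => (w p.2 p.1, p.2)
        invFun := fun p => ((w p.2)⁻¹ p.1, p.2)
        left_inv := fun p => by simp
        right_inv := fun p => by simp } with hπ
    have hπG : π ∈ G := by
      rw [hG]
      exact ⟨1, w, V.one_mem, fun j => by by_cases h : j = j0 <;> simp [hw, h, hu0U, U.one_mem],
        fun p => rfl⟩
    have hπF : rename (⇑π) F = -F := by
      rw [key 1 w π (fun j => by by_cases h : j = j0 <;> simp [hw, h, hu0U, U.one_mem])
        (fun p => rfl)]
      have : (∏ j : Fin m, if w j ∈ N then (1:ℤ) else -1) = -1 := by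
        rw [Finset.prod_eq_single j0]
        · simp [hw, hu0N]
        · intro b _ hb; simp [hw, hb, N.one_mem]
        · intro h; exact absurd (Finset.mem_univ j0) h
      rw [this]; simp
    refine ⟨⟨π, hπG⟩, fun b => ?_⟩
    rw [Subgroup.mem_subgroupOf, Subgroup.mem_subgroupOf]
    have hbG : (b : Equiv.Perm (Fin d × Fin m)) ∈ G := b.2
    have hcoe : ((b * ⟨π, hπG⟩ : G) : Equiv.Perm (Fin d × Fin m))
        = (b : Equiv.Perm (Fin d × Fin m)) * π := rfl
    rw [hcoe]
    have hmulF : rename (⇑((b : Equiv.Perm (Fin d × Fin m)) * π)) F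
        = -(rename (⇑(b : Equiv.Perm (Fin d × Fin m))) F) := by
      rw [show ⇑((b : Equiv.Perm (Fin d × Fin m)) * π) = ⇑(b : Equiv.Perm (Fin d × Fin m)) ∘ ⇑π
        from rfl, ← rename_rename, hπF, map_neg]
    simp only [Subgroup.mem_mk, Set.mem_setOf_eq]
    rcases dich _ hbG with h | h
    · exact Or.inr ⟨⟨hbG, h⟩,
        fun hc => hFne (hc.2.symm.trans (hmulF.trans (by rw [h])))⟩
    · exact Or.inl ⟨⟨G.mul_mem hbG hπG, hmulF.trans (by rw [h, neg_neg])⟩,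
        fun hc => hFne (hc.2.symm.trans h)⟩
end

section
/- Let f ∈ ℤ[x] be monic of degree n with n distinct roots α_1,…,α_n in a fixed algebraic closure K of ℚ, and let L = ℚ(α_1,…,α_n). Let H ≤ G ≤ Sym(n) and assume Gal(f) ≤ G, i.e., p(τ) ∈ G for every τ ∈ Gal(L/ℚ). Let F ∈ ℤ[X_1,…,X_n] be H-invariant (F^h = F for all h ∈ H), and let G//H be a set of representatives of the right cosets of H in G. Then the relative resolvent R_F(T) := ∏_{σ ∈ G//H} (T − F^σ(α_1,…,α_n)) ∈ L[T] has all of its coefficients in ℤ; i.e., R_F is (the image of) a polynomial in ℤ[T]. -/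
open MvPolynomial Polynomial

lemma permAct_mul {n : ℕ} (σ τ : Equiv.Perm (Fin n)) (F : MvPolynomial (Fin n) ℤ) :
    permAct (σ * τ) F = permAct τ (permAct σ F) := by
  unfold permAct
  rw [rename_rename, mul_inv_rev]
  rfl

set_option maxHeartbeats 1000000 in
set_option synthInstance.maxHeartbeats 200000 in
/-- Lemma: integrality of the relative resolvent.  Let `f ∈ ℤ[x]` be
monic of degree `n` with `n` distinct roots `α_1,…,α_n` in a fixed algebraic closure `K`
of `ℚ`, and `L = ℚ(α_1,…,α_n)`.  Let `H ≤ G ≤ Sym(n)`, assume `Gal(f) ≤ G` (i.e. the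
permutation `p(τ)` of the roots induced by any `τ ∈ Gal(L/ℚ)` lies in `G`), let
`F ∈ ℤ[X_1,…,X_n]` be `H`-invariant, and let `R = G//H` be a set of representatives of
the right cosets of `H` in `G`.  Then the relative resolvent
`R_F(T) := ∏_{σ ∈ G//H} (T − F^σ(α_1,…,α_n)) ∈ L[T]` has all its coefficients in `ℤ`. -/
theorem statement14 (n : ℕ) (K : Type*) [Field K] [Algebra ℚ K] [IsAlgClosure ℚ K]
    (f : Polynomial ℤ) (hmonic : f.Monic) (hdeg : f.natDegree = n)
    (α : Fin n → K) (hinj : Function.Injective α)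
    (hroots : f.map (algebraMap ℤ K) = ∏ i : Fin n, (Polynomial.X - Polynomial.C (α i)))
    (L : IntermediateField ℚ K) (hL : L = IntermediateField.adjoin ℚ (Set.range α))
    (αL : Fin n → ↥L) (hαL : ∀ i, (αL i : K) = α i)
    (G H : Subgroup (Equiv.Perm (Fin n))) (hHG : H ≤ G)
    (p : (↥L ≃ₐ[ℚ] ↥L) → Equiv.Perm (Fin n))
    (hp : ∀ (τ : ↥L ≃ₐ[ℚ] ↥L) (i : Fin n), τ (αL i) = αL (p τ i))
    (hGal : ∀ τ : ↥L ≃ₐ[ℚ] ↥L, p τ ∈ G)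
    (F : MvPolynomial (Fin n) ℤ)
    (hF : ∀ h ∈ H, permAct h F = F)
    (R : Finset (Equiv.Perm (Fin n)))
    (hRG : ∀ r ∈ R, r ∈ G)
    (hreps : ∀ g ∈ G, ∃! r, r ∈ R ∧ g * r⁻¹ ∈ H) :
    ∀ k : ℕ,
      ∃ c : ℤ,
        (∏ r ∈ R, (Polynomial.X -
            Polynomial.C (MvPolynomial.aeval αL (permAct r F) : ↥L))).coeff k
          = algebraMap ℤ ↥L c := by
  classical
  intro k
  haveI : IsAlgClosed K := IsAlgClosure.isAlgClosed ℚ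
  -- L/ℚ is Galois
  set f' := f.map (algebraMap ℤ ℚ) with hf'
  have hf'ne : f' ≠ 0 := (hmonic.map (algebraMap ℤ ℚ)).ne_zero
  have hfK : f'.map (algebraMap ℚ K) = ∏ i : Fin n, (Polynomial.X - Polynomial.C (α i)) := by
    rw [hf', Polynomial.map_map, ← IsScalarTower.algebraMap_eq, hroots]
  have hsplits : (f'.map (algebraMap ℚ K)).Splits := IsAlgClosed.splits _
  have hsep : f'.Separable := by
    rw [← Polynomial.separable_map (algebraMap ℚ K), hfK]
    exact Polynomial.separable_prod_X_sub_C_iff.2 hinj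
  have hset : Set.range α = f'.rootSet K := by
    ext x
    rw [Polynomial.mem_rootSet]
    constructor
    · rintro ⟨i, rfl⟩
      refine ⟨hf'ne, ?_⟩
      rw [Polynomial.aeval_def, ← Polynomial.eval_map, hfK, Polynomial.eval_prod]
      exact Finset.prod_eq_zero (Finset.mem_univ i) (by simp)
    · rintro ⟨-, hx⟩
      rw [Polynomial.aeval_def, ← Polynomial.eval_map, hfK, Polynomial.eval_prod] at hx
      obtain ⟨i, -, hi⟩ := Finset.prod_eq_zero_iff.mp hx
      simp only [Polynomial.eval_sub, Polynomial.eval_X, Polynomial.eval_C, sub_eq_zero] at hi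
      exact ⟨i, hi.symm⟩
  haveI sp : Polynomial.IsSplittingField ℚ ↥L f' := by
    rw [hL, hset]
    have := IntermediateField.adjoin_rootSet_isSplittingField (K := ℚ) (L := K) hsplits
    convert this using 2
    exact Subsingleton.elim _ _
  haveI fd1 : FiniteDimensional ℚ ↥L := by
    rw [hL]
    haveI : Finite (Set.range α) := Set.finite_range α
    exact IntermediateField.finiteDimensional_adjoin fun x _ =>
      Algebra.IsIntegral.isIntegral (R := ℚ) x
  haveI fd2 := Polynomial.IsSplittingField.finiteDimensional ↥L f'
  haveI hgal : IsGalois ℚ ↥L := IsGalois.of_separable_splitting_field hsep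
  -- fixed elements are rational
  have hfix : ∀ x : ↥L, (∀ τ : ↥L ≃ₐ[ℚ] ↥L, τ x = x) → ∃ q : ℚ, algebraMap ℚ ↥L q = x := by
    intro x hx
    have htop : IntermediateField.fixedField (⊤ : Subgroup (↥L ≃ₐ[ℚ] ↥L)) = ⊥ :=
      ((IsGalois.tfae (F := ℚ) (E := ↥L)).out 0 1).mp hgal
    have hxmem : x ∈ IntermediateField.fixedField (⊤ : Subgroup (↥L ≃ₐ[ℚ] ↥L)) :=
      fun τ => hx τ.1
    rw [htop, IntermediateField.mem_bot] at hxmem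
    exact hxmem
  -- the values
  set V : Equiv.Perm (Fin n) → ↥L := fun g => MvPolynomial.aeval αL (permAct g F) with hV
  have Vcoset : ∀ h ∈ H, ∀ g, V (h * g) = V g := by
    intro h hh g
    show MvPolynomial.aeval αL (permAct (h * g) F) = MvPolynomial.aeval αL (permAct g F)
    rw [permAct_mul, hF h hh]
  -- the representative function
  have hrepsig : ∀ g : Equiv.Perm (Fin n), g ∈ G →
      { r : Equiv.Perm (Fin n) // (r ∈ R ∧ g * r⁻¹ ∈ H) ∧
        ∀ r', r' ∈ R ∧ g * r'⁻¹ ∈ H → r' = r } := by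
    intro g hg
    choose r hr using hreps g hg
    exact ⟨r, hr⟩
  set rep : Equiv.Perm (Fin n) → Equiv.Perm (Fin n) :=
    fun g => if hg : g ∈ G then (hrepsig g hg).1 else 1 with hrepdef
  have repR : ∀ g ∈ G, rep g ∈ R ∧ g * (rep g)⁻¹ ∈ H := by
    intro g hg; rw [hrepdef]; simp only [dif_pos hg]; exact (hrepsig g hg).2.1
  have repUniq : ∀ g ∈ G, ∀ r, r ∈ R ∧ g * r⁻¹ ∈ H → r = rep g := by
    intro g hg r hr; rw [hrepdef]; simp only [dif_pos hg]; exact (hrepsig g hg).2.2 r hr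
  have repRfix : ∀ r ∈ R, rep r = r := by
    intro r hr
    exact (repUniq r (hRG r hr) r ⟨hr, by simp [H.one_mem]⟩).symm
  have repH : ∀ g ∈ G, ∀ h ∈ H, rep (h * g) = rep g := by
    intro g hg h hh
    refine (repUniq (h * g) (G.mul_mem (hHG hh) hg) (rep g) ⟨(repR g hg).1, ?_⟩).symm
    have : h * g * (rep g)⁻¹ = h * (g * (rep g)⁻¹) := by group
    rw [this]
    exact H.mul_mem hh (repR g hg).2
  have Vrep : ∀ g ∈ G, V (rep g) = V g := by
    intro g hg
    obtain ⟨hrR, hrH⟩ := repR g hg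
    conv_rhs => rw [show g = (g * (rep g)⁻¹) * rep g by group]
    rw [Vcoset _ hrH]
  -- Galois action on values
  have hτV : ∀ (τ : ↥L ≃ₐ[ℚ] ↥L) (g : Equiv.Perm (Fin n)),
      τ (V g) = V (g * (p τ)⁻¹) := by
    intro τ g
    have key : ∀ v : Fin n → ↥L, τ (MvPolynomial.aeval v F) =
        MvPolynomial.aeval (fun i => τ (v i)) F := fun v =>
      MvPolynomial.comp_aeval_apply (R := ℤ) (f := v)
        ((τ : ↥L →ₐ[ℚ] ↥L).restrictScalars ℤ) F
    show τ (MvPolynomial.aeval αL (permAct g F)) =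
      MvPolynomial.aeval αL (permAct (g * (p τ)⁻¹) F)
    simp only [permAct, aeval_rename]
    rw [key]
    have hfun : (fun i => τ ((αL ∘ ⇑g⁻¹) i)) = αL ∘ ⇑(g * (p τ)⁻¹)⁻¹ := by
      funext i
      simp only [Function.comp_apply, hp τ, mul_inv_rev, inv_inv, Equiv.Perm.coe_mul]
    rw [hfun]
  -- the resolvent polynomial
  set P : Polynomial ↥L := ∏ r ∈ R, (Polynomial.X - Polynomial.C (V r)) with hP
  -- Galois-invariance of P
  have hPmap : ∀ τ : ↥L ≃ₐ[ℚ] ↥L, P.map (τ : ↥L →+* ↥L) = P := by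
    intro τ
    rw [hP, Polynomial.map_prod]
    simp only [Polynomial.map_sub, Polynomial.map_X, Polynomial.map_C]
    refine Finset.prod_bij' (fun r _ => rep (r * (p τ)⁻¹)) (fun r _ => rep (r * (p τ)))
      ?_ ?_ ?_ ?_ ?_
    · intro r hr
      exact (repR _ (G.mul_mem (hRG r hr) (G.inv_mem (hGal τ)))).1
    · intro r hr
      exact (repR _ (G.mul_mem (hRG r hr) (hGal τ))).1
    · intro r hr
      have hgG : r * (p τ)⁻¹ ∈ G := G.mul_mem (hRG r hr) (G.inv_mem (hGal τ))
      obtain ⟨hsR, hsH⟩ := repR _ hgG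
      show rep (rep (r * (p τ)⁻¹) * p τ) = r
      have hkey : rep (r * (p τ)⁻¹) * p τ =
          (r * (p τ)⁻¹ * (rep (r * (p τ)⁻¹))⁻¹)⁻¹ * r := by group
      rw [hkey, repH r (hRG r hr) _ (H.inv_mem hsH), repRfix r hr]
    · intro r hr
      have hgG : r * p τ ∈ G := G.mul_mem (hRG r hr) (hGal τ)
      obtain ⟨hsR, hsH⟩ := repR _ hgG
      show rep (rep (r * p τ) * (p τ)⁻¹) = r
      have hkey : rep (r * p τ) * (p τ)⁻¹ =
          (r * p τ * (rep (r * p τ))⁻¹)⁻¹ * r := by group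
      rw [hkey, repH r (hRG r hr) _ (H.inv_mem hsH), repRfix r hr]
    · intro r hr
      have hgG : r * (p τ)⁻¹ ∈ G := G.mul_mem (hRG r hr) (G.inv_mem (hGal τ))
      show Polynomial.X - Polynomial.C (τ (V r)) =
        Polynomial.X - Polynomial.C (V (rep (r * (p τ)⁻¹)))
      rw [hτV τ r, Vrep _ hgG]
  -- each coefficient is fixed, hence rational
  have hrat : ∃ q : ℚ, algebraMap ℚ ↥L q = P.coeff k := by
    refine hfix _ fun τ => ?_
    have := congrArg (fun Q : Polynomial ↥L => Q.coeff k) (hPmap τ)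
    simpa [Polynomial.coeff_map] using this
  -- integrality of the roots
  have hLK : Function.Injective (algebraMap (↥L) K) := (algebraMap (↥L) K).injective
  have haint : ∀ i, IsIntegral ℤ (αL i) := by
    intro i
    refine ⟨f, hmonic, ?_⟩
    rw [← Polynomial.aeval_def]
    apply hLK
    rw [map_zero, ← Polynomial.aeval_algebraMap_apply]
    have hcoe : (algebraMap (↥L) K) (αL i) = α i := hαL i
    rw [hcoe, Polynomial.aeval_def, ← Polynomial.eval_map, hroots, Polynomial.eval_prod]
    exact Finset.prod_eq_zero (Finset.mem_univ i) (by simp)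
  -- each value V g is integral over ℤ
  have hVS : ∀ g, V g ∈ integralClosure ℤ ↥L := by
    intro g
    have h1 : V g = ((MvPolynomial.aeval
        (fun i => (⟨αL i, haint i⟩ : integralClosure ℤ ↥L)) (permAct g F) :
          integralClosure ℤ ↥L) : ↥L) := by
      rw [← Subalgebra.mvPolynomial_aeval_coe]
    rw [h1]
    exact (MvPolynomial.aeval
      (fun i => (⟨αL i, haint i⟩ : integralClosure ℤ ↥L)) (permAct g F)).2
  -- whence each coefficient of P is integral over ℤ
  have hPS : P.coeff k ∈ integralClosure ℤ ↥L := by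
    have hmapP : P = (∏ r ∈ R, (Polynomial.X -
        Polynomial.C (⟨V r, hVS r⟩ : integralClosure ℤ ↥L))).map
          (algebraMap (integralClosure ℤ ↥L) ↥L) := by
      rw [hP, Polynomial.map_prod]
      simp only [Polynomial.map_sub, Polynomial.map_X, Polynomial.map_C]
      rfl
    rw [hmapP, Polynomial.coeff_map]
    exact ((∏ r ∈ R, (Polynomial.X -
      Polynomial.C (⟨V r, hVS r⟩ : integralClosure ℤ ↥L))).coeff k).2
  -- conclusion: rational + integral = integer
  obtain ⟨q, hq⟩ := hrat
  have hqint : IsIntegral ℤ q := by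
    rw [← isIntegral_algebraMap_iff (algebraMap ℚ ↥L).injective, hq]
    exact hPS
  obtain ⟨c, hc⟩ := IsIntegrallyClosed.isIntegral_iff.mp hqint
  refine ⟨c, ?_⟩
  rw [IsScalarTower.algebraMap_apply ℤ ℚ ↥L, hc, hq]
end

section
/- Let f ∈ ℤ[x] be monic of degree n with n distinct roots α_1,…,α_n in a fixed algebraic closure K of ℚ, and let L = ℚ(α_1,…,α_n). Let H ≤ G ≤ Sym(n), assume p(τ) ∈ G for all τ ∈ Gal(L/ℚ), let F ∈ ℤ[X_1,…,X_n] be H-invariant, and let R_F(T) := ∏_{σ ∈ G//H} (T − F^σ(α_1,…,α_n)). Assume R_F is squarefree and that A ∈ ℤ[T] is a monic divisor of R_F in ℤ[T] of degree m. Then there exist σ_1,…,σ_m ∈ G, lying in pairwise distinct right cosets of H, such that A(T) = ∏_{i=1}^m (T − F^{σ_i}(α_1,…,α_n)) in L[T]; moreover, setting B := {Hσ_1,…,Hσ_m} (a set of right cosets of H in G), for every τ ∈ Gal(L/ℚ) the right-multiplication action of p(τ) on the right cosets H\G maps B onto B. Equivalently, Gal(f) ≤ ρ^{-1}(Stab_{ρ(G)}(B))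 where ρ : G → Sym(H\G) is the permutation action of G on the right cosets of H. -/
open MvPolynomial Polynomial

/-- Theorem on factors of the resolvent.  In the resolvent setting
(monic `f ∈ ℤ[x]` with distinct roots `α_1,…,α_n` in an algebraic closure `K` of `ℚ`,
splitting field `L`, `H ≤ G ≤ Sym(n)` with `Gal(f) ≤ G`, `F` an `H`-invariant
polynomial, `R_F(T) = ∏_{σ ∈ G//H}(T − F^σ(α))`), assume `R_F` is squarefree and `A`
is a monic divisor of `R_F` in `ℤ[T]` of degree `m`.  Then there are `σ_1,…,σ_m ∈ G`
in pairwise distinct right cosets of `H` with `A(T) = ∏_{i=1}^m (T − F^{σ_i}(α))`, and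
for every `τ ∈ Gal(L/ℚ)` the right-multiplication action of `p(τ)` on the right cosets
`H\G` maps `B := {Hσ_1,…,Hσ_m}` onto itself (i.e. for each `i` there is `j` with
`H σ_i p(τ) = H σ_j`); equivalently `Gal(f) ≤ ρ⁻¹(Stab_{ρ(G)}(B))`. -/
theorem statement15 (n m : ℕ) (K : Type*) [Field K] [Algebra ℚ K] [IsAlgClosure ℚ K]
    (f : Polynomial ℤ) (hmonic : f.Monic) (hdeg : f.natDegree = n)
    (α : Fin n → K) (hinj : Function.Injective α)
    (hroots : f.map (algebraMap ℤ K) = ∏ i : Fin n, (Polynomial.X - Polynomial.C (α i)))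
    (L : IntermediateField ℚ K) (hL : L = IntermediateField.adjoin ℚ (Set.range α))
    (αL : Fin n → ↥L) (hαL : ∀ i, (αL i : K) = α i)
    (G H : Subgroup (Equiv.Perm (Fin n))) (hHG : H ≤ G)
    (p : (↥L ≃ₐ[ℚ] ↥L) → Equiv.Perm (Fin n))
    (hp : ∀ (τ : ↥L ≃ₐ[ℚ] ↥L) (i : Fin n), τ (αL i) = αL (p τ i))
    (hGal : ∀ τ : ↥L ≃ₐ[ℚ] ↥L, p τ ∈ G)
    (F : MvPolynomial (Fin n) ℤ)
    (hF : ∀ h ∈ H, permAct h F = F)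
    (R : Finset (Equiv.Perm (Fin n)))
    (hRG : ∀ r ∈ R, r ∈ G)
    (hreps : ∀ g ∈ G, ∃! r, r ∈ R ∧ g * r⁻¹ ∈ H)
    (hsqf : Squarefree (∏ r ∈ R, (Polynomial.X -
        Polynomial.C (MvPolynomial.aeval αL (permAct r F) : ↥L))))
    (A : Polynomial ℤ) (hA : A.Monic) (hAdeg : A.natDegree = m)
    (hdvd : A.map (algebraMap ℤ ↥L) ∣
      ∏ r ∈ R, (Polynomial.X - Polynomial.C (MvPolynomial.aeval αL (permAct r F) : ↥L))) :
    ∃ σ : Fin m → Equiv.Perm (Fin n),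
      (∀ i, σ i ∈ G) ∧
      (∀ i j, σ i * (σ j)⁻¹ ∈ H → i = j) ∧
      (A.map (algebraMap ℤ ↥L) =
        ∏ i : Fin m, (Polynomial.X -
          Polynomial.C (MvPolynomial.aeval αL (permAct (σ i) F) : ↥L))) ∧
      (∀ τ : ↥L ≃ₐ[ℚ] ↥L, ∀ i : Fin m, ∃ j : Fin m, σ i * p τ * (σ j)⁻¹ ∈ H) := by
    classical
  set φ : ℤ →+* ↥L := algebraMap ℤ ↥L with hφ
  set β : Equiv.Perm (Fin n) → ↥L := fun r => aeval αL (permAct r F) with hβ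
  have hcomp : ∀ (s t : Equiv.Perm (Fin n)) (F' : MvPolynomial (Fin n) ℤ),
      permAct s (permAct t F') = permAct (t * s) F' := by
    intro s t F'
    simp [permAct, rename_rename, mul_inv_rev, Equiv.Perm.coe_mul]
  have hβcoset : ∀ g r, g * r⁻¹ ∈ H → β g = β r := by
    intro g r h
    have hg : g = (g * r⁻¹) * r := by group
    simp only [hβ]
    rw [hg, ← hcomp r (g * r⁻¹) F, hF _ h]
  have hsqf' : Squarefree (∏ r ∈ R, (Polynomial.X - Polynomial.C (β r))) := hsqf
  have hdvd' : A.map φ ∣ ∏ r ∈ R, (Polynomial.X - Polynomial.C (β r)) := hdvd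
  set P : Polynomial ↥L := ∏ r ∈ R, (Polynomial.X - Polynomial.C (β r)) with hP
  have hPeq : P = ((R.val.map β).map fun a => Polynomial.X - Polynomial.C a).prod := by
    rw [Multiset.map_map, hP, Finset.prod]
    rfl
  have hProots : P.roots = R.val.map β := by
    rw [hPeq, roots_multiset_prod_X_sub_C]
  have hPne : P ≠ 0 := hsqf'.ne_zero
  have hnodup : (R.val.map β).Nodup := hProots ▸ (nodup_roots (PerfectField.separable_iff_squarefree.mpr hsqf'))
  have hβinjR : ∀ r ∈ R, ∀ r' ∈ R, β r = β r' → r = r' := by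
    intro r hr r' hr' h
    exact Multiset.inj_on_of_nodup_map hnodup r hr r' hr' h
  have hcosetβ : ∀ g g', g ∈ G → g' ∈ G → β g = β g' → g * g'⁻¹ ∈ H := by
    intro g g' hg hg' hβeq
    obtain ⟨r, ⟨hrR, hrH⟩, hru⟩ := hreps g hg
    obtain ⟨r', ⟨hrR', hrH'⟩, hru'⟩ := hreps g' hg'
    have hre : r = r' :=
      hβinjR r hrR r' hrR' (by rw [← hβcoset g r hrH, hβeq, hβcoset g' r' hrH'])
    subst hre
    have : g * g'⁻¹ = (g * r⁻¹) * (g' * r⁻¹)⁻¹ := by group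
    rw [this]
    exact H.mul_mem hrH (H.inv_mem hrH')
  have hPsplits : P.Splits :=
    Splits.prod fun r _ => Splits.X_sub_C _
  have hAm : (A.map φ).Monic := hA.map φ
  have hAsplits : (A.map φ).Splits :=
    Splits.of_dvd hPsplits hPne hdvd'
  have hrootsle : (A.map φ).roots ≤ P.roots := roots.le_of_dvd hPne hdvd'
  have hAfac : A.map φ = ((A.map φ).roots.map fun a => Polynomial.X - Polynomial.C a).prod :=
    hAsplits.eq_prod_roots_of_monic hAm
  have hcard : (A.map φ).roots.card = m := by
    rw [splits_iff_card_roots.mp hAsplits, hA.natDegree_map φ, hAdeg]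
  set S : Finset (Equiv.Perm (Fin n)) := R.filter (fun r => β r ∈ (A.map φ).roots) with hS
  have hSR : ∀ r ∈ S, r ∈ R := fun r hr => (Finset.mem_filter.mp hr).1
  have hSval : S.val.map β = (A.map φ).roots := by
    have hnd1 : (S.val.map β).Nodup :=
      Multiset.nodup_of_le (Multiset.map_le_map (Finset.val_le_iff.mpr (Finset.filter_subset _ R))) hnodup
    have hnd2 : ((A.map φ).roots).Nodup := Multiset.nodup_of_le hrootsle (hProots ▸ hnodup)
    rw [Multiset.Nodup.ext hnd1 hnd2]
    intro b
    constructor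
    · intro hb
      obtain ⟨r, hrS, hrb⟩ := Multiset.mem_map.mp hb
      have := (Finset.mem_filter.mp hrS).2
      rwa [hrb] at this
    · intro hb
      have hbP : b ∈ R.val.map β := hProots ▸ Multiset.mem_of_le hrootsle hb
      obtain ⟨r, hrR, hrb⟩ := Multiset.mem_map.mp hbP
      exact Multiset.mem_map.mpr ⟨r, Finset.mem_filter.mpr ⟨hrR, hrb ▸ hb⟩, hrb⟩
  have hScard : S.card = m := by
    have := congrArg Multiset.card hSval
    simpa [hcard] using this
  set E : Fin m ≃ ↥S := (finCongr hScard.symm).trans S.equivFin.symm with hE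
  refine ⟨fun i => (E i : Equiv.Perm (Fin n)), ?_, ?_, ?_, ?_⟩
  · intro i
    exact hRG _ (hSR _ (E i).2)
  · intro i j h
    have : ((E i : Equiv.Perm (Fin n))) = (E j : Equiv.Perm (Fin n)) :=
      hβinjR _ (hSR _ (E i).2) _ (hSR _ (E j).2) (hβcoset _ _ h)
    exact E.injective (Subtype.ext this)
  · calc A.map φ = ((A.map φ).roots.map fun a => Polynomial.X - Polynomial.C a).prod := hAfac
      _ = ((S.val.map β).map fun a => Polynomial.X - Polynomial.C a).prod := by rw [hSval]
      _ = ∏ r ∈ S, (Polynomial.X - Polynomial.C (β r)) := by rw [Multiset.map_map, Finset.prod]; rfl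
      _ = ∏ x : ↥S, (Polynomial.X - Polynomial.C (β (x : Equiv.Perm (Fin n)))) := by
          rw [← Finset.prod_coe_sort]
      _ = ∏ i : Fin m, (Polynomial.X - Polynomial.C (β (E i : Equiv.Perm (Fin n)))) :=
          (Equiv.prod_comp E fun x => (Polynomial.X - Polynomial.C (β (x : Equiv.Perm (Fin n))))).symm
  · intro τ i
    -- τ.symm moves β g to β (g * p τ)
    have hτα : ∀ k, τ.symm (αL k) = αL ((p τ)⁻¹ k) := by
      intro k
      have := hp τ ((p τ)⁻¹ k)
      rw [← Equiv.Perm.mul_apply, mul_inv_cancel, Equiv.Perm.one_apply] at this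
      rw [← this, AlgEquiv.symm_apply_apply]
    have hhom : ∀ (v : Fin n → ↥L) (F' : MvPolynomial (Fin n) ℤ),
        τ.symm (aeval v F') = aeval (fun k => τ.symm (v k)) F' := by
      intro v F'
      induction F' using MvPolynomial.induction_on with
      | C a => simp [algebraMap_int_eq, map_intCast]
      | add p q hp hq => simp [hp, hq]
      | mul_X p i hp => simp [hp]
    have hτβ : ∀ g, τ.symm (β g) = β (g * p τ) := by
      intro g
      simp only [hβ, permAct, aeval_rename, hhom]
      have hfun : (fun k => τ.symm ((αL ∘ ⇑g⁻¹) k)) = αL ∘ ⇑(g * p τ)⁻¹ := by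
        funext k
        simp [hτα, mul_inv_rev, Equiv.Perm.coe_mul, Function.comp]
      rw [hfun]
    have hroot : β ((E i : Equiv.Perm (Fin n)) * p τ) ∈ (A.map φ).roots := by
      set x : ↥L := β (E i : Equiv.Perm (Fin n)) with hx
      have h1 : x ∈ (A.map φ).roots := (Finset.mem_filter.mp (E i).2).2
      rw [← hτβ]
      rw [mem_roots hAm.ne_zero] at h1 ⊢
      have hc2 : ((τ.symm : ↥L →+* ↥L).comp φ) = φ := Subsingleton.elim _ _
      show Polynomial.eval (τ.symm x) (A.map φ) = 0
      calc Polynomial.eval (τ.symm x) (A.map φ)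
          = Polynomial.eval₂ ((τ.symm : ↥L →+* ↥L).comp φ) ((τ.symm : ↥L →+* ↥L) x) A := by
            rw [hc2, Polynomial.eval_map]; rfl
        _ = τ.symm (Polynomial.eval₂ φ x A) :=
            (Polynomial.hom_eval₂ A φ (τ.symm : ↥L →+* ↥L) x).symm
        _ = 0 := by
            rw [← Polynomial.eval_map, show Polynomial.eval x (A.map φ) = 0 from h1]
            exact map_zero _
    rw [← hSval] at hroot
    obtain ⟨r, hrS, hrb⟩ := Multiset.mem_map.mp hroot
    refine ⟨E.symm ⟨r, hrS⟩, ?_⟩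
    have hmem := hcosetβ ((E i : Equiv.Perm (Fin n)) * p τ) r
      (G.mul_mem (hRG _ (hSR _ (E i).2)) (hGal τ)) (hRG _ (hSR _ hrS)) hrb.symm
    simpa using hmem
end

section
/- Let f ∈ ℤ[x] be monic of degree n with n distinct roots α_1,…,α_n in a fixed algebraic closure K of ℚ, and let L = ℚ(α_1,…,α_n). Let H ≤ G ≤ Sym(n), assume p(τ) ∈ G for all τ ∈ Gal(L/ℚ), let F ∈ ℤ[X_1,…,X_n] be H-invariant, and let R_F(T) := ∏_{σ ∈ G//H} (T − F^σ(α_1,…,α_n)). Assume R_F is squarefree and that for some σ ∈ G the value F^σ(α_1,…,α_n) lies in ℤ (so T − F^σ(α) is a linear factor of R_F in ℤ[T]). Then Gal(f) ≤ σ^{-1} H σ; i.e., p(τ) ∈ σ^{-1} H σ for every τ ∈ Gal(L/ℚ). -/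
open MvPolynomial Polynomial

/-- Corollary: linear factor of the resolvent.  In the resolvent
setting (monic `f ∈ ℤ[x]` with distinct roots `α_1,…,α_n` in an algebraic closure `K`
of `ℚ`, splitting field `L`, `H ≤ G ≤ Sym(n)` with `Gal(f) ≤ G`, `F` an `H`-invariant
polynomial, `R_F(T) = ∏_{σ ∈ G//H}(T − F^σ(α))`), assume `R_F` is squarefree and that
for some `σ ∈ G` the value `F^σ(α_1,…,α_n)` is a rational integer `θ` (so
`T − F^σ(α)` is a linear factor of `R_F` in `ℤ[T]`).  Then `Gal(f) ≤ σ⁻¹Hσ`, i.e.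
`p(τ) ∈ σ⁻¹Hσ` (equivalently `σ·p(τ)·σ⁻¹ ∈ H`) for every `τ ∈ Gal(L/ℚ)`. -/
theorem statement17 (n : ℕ) (K : Type*) [Field K] [Algebra ℚ K] [IsAlgClosure ℚ K]
    (f : Polynomial ℤ) (hmonic : f.Monic) (hdeg : f.natDegree = n)
    (α : Fin n → K) (hinj : Function.Injective α)
    (hroots : f.map (algebraMap ℤ K) = ∏ i : Fin n, (Polynomial.X - Polynomial.C (α i)))
    (L : IntermediateField ℚ K) (hL : L = IntermediateField.adjoin ℚ (Set.range α))
    (αL : Fin n → ↥L) (hαL : ∀ i, (αL i : K) = α i)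
    (G H : Subgroup (Equiv.Perm (Fin n))) (hHG : H ≤ G)
    (p : (↥L ≃ₐ[ℚ] ↥L) → Equiv.Perm (Fin n))
    (hp : ∀ (τ : ↥L ≃ₐ[ℚ] ↥L) (i : Fin n), τ (αL i) = αL (p τ i))
    (hGal : ∀ τ : ↥L ≃ₐ[ℚ] ↥L, p τ ∈ G)
    (F : MvPolynomial (Fin n) ℤ)
    (hF : ∀ h ∈ H, permAct h F = F)
    (R : Finset (Equiv.Perm (Fin n)))
    (hRG : ∀ r ∈ R, r ∈ G)
    (hreps : ∀ g ∈ G, ∃! r, r ∈ R ∧ g * r⁻¹ ∈ H)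
    (hsqf : Squarefree (∏ r ∈ R, (Polynomial.X -
        Polynomial.C (MvPolynomial.aeval αL (permAct r F) : ↥L))))
    (σ : Equiv.Perm (Fin n)) (hσG : σ ∈ G)
    (θ : ℤ) (hθ : (MvPolynomial.aeval αL (permAct σ F) : ↥L) = algebraMap ℤ ↥L θ) :
    ∀ τ : ↥L ≃ₐ[ℚ] ↥L, σ * p τ * σ⁻¹ ∈ H := by
  intro τ
  set v : Equiv.Perm (Fin n) → ↥L := fun g => MvPolynomial.aeval αL (permAct g F) with hv
  -- v is constant on right cosets H g
  have hA : ∀ h ∈ H, ∀ g, v (h * g) = v g := by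
    intro h hh g
    have e1 : permAct (h * g) F = permAct g (permAct h F) := by
      unfold permAct
      rw [mul_inv_rev, Equiv.Perm.coe_mul, ← MvPolynomial.rename_rename]
    simp only [hv, e1, hF h hh]
  -- τ moves the value
  have hB : ∀ g, τ (v g) = v (g * (p τ)⁻¹) := by
    intro g
    have key : ∀ (y : Fin n → ↥L) (F' : MvPolynomial (Fin n) ℤ),
        τ (MvPolynomial.aeval y F') = MvPolynomial.aeval (fun i => τ (y i)) F' := by
      intro y F'
      have := MvPolynomial.comp_aeval (R := ℤ) (f := y)
        ((τ.toAlgHom.restrictScalars ℤ))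
      exact congrArg (fun φ => φ F') this ▸ (by
        simpa using congrFun (congrArg (fun φ => φ.toFun) this) F')
    simp only [hv, permAct, MvPolynomial.aeval_rename]
    rw [key]
    congr 1
    ext i
    simp [hp τ, mul_inv_rev]
  -- distinctness of values on R
  have hC : ∀ r₀ ∈ R, ∀ r₁ ∈ R, v r₀ = v r₁ → r₀ = r₁ := by
    intro r₀ h₀ r₁ h₁ hvv
    by_contra hne
    have hsub : ({r₀, r₁} : Finset (Equiv.Perm (Fin n))) ⊆ R := by
      intro x hx; simp at hx; rcases hx with rfl | rfl <;> assumption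
    have hdvd : (Polynomial.X - Polynomial.C (v r₀)) * (Polynomial.X - Polynomial.C (v r₀)) ∣
        ∏ r ∈ R, (Polynomial.X - Polynomial.C (v r)) := by
      have := Finset.prod_dvd_prod_of_subset ({r₀, r₁} : Finset (Equiv.Perm (Fin n))) R
        (fun r => Polynomial.X - Polynomial.C (v r)) hsub
      rwa [Finset.prod_pair hne, ← hvv] at this
    exact Polynomial.not_isUnit_X_sub_C (v r₀) (hsqf _ hdvd)
  -- coset representatives
  obtain ⟨r₀, ⟨hr₀R, hr₀H⟩, -⟩ := hreps σ hσG
  have hg : σ * (p τ)⁻¹ ∈ G := mul_mem hσG (inv_mem (hGal τ))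
  obtain ⟨r₁, ⟨hr₁R, hr₁H⟩, -⟩ := hreps (σ * (p τ)⁻¹) hg
  have e0 : v σ = v r₀ := by
    have := hA _ hr₀H r₀
    simpa [inv_mul_cancel_right] using this
  have e1 : v (σ * (p τ)⁻¹) = v r₁ := by
    have := hA _ hr₁H r₁
    simpa [inv_mul_cancel_right] using this
  have efix : τ (v σ) = v σ := by
    rw [hv]; simp only []
    rw [show (MvPolynomial.aeval αL) (permAct σ F) = algebraMap ℤ ↥L θ from hθ]
    simp
  have : v r₀ = v r₁ := by
    rw [← e0, ← e1, ← hB, efix]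
  have hr : r₀ = r₁ := hC _ hr₀R _ hr₁R this
  subst hr
  have : (σ * r₀⁻¹) * (σ * (p τ)⁻¹ * r₀⁻¹)⁻¹ ∈ H := mul_mem hr₀H (inv_mem hr₁H)
  convert this using 1
  group
end
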